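/- arXiv:1706.03276 — 12 statements merged into one kernel-verified Lean document; each statement's English description precedes it below -/
import Mathlib

section
/- Let G be an ordered group, let n ≥ 2 be an integer, and let p, q be positive integers with n = p + q. Then G embeds the poset 1 ⊕ n if and only if G embeds the poset (q+1) ⊕ p. Concretely: there exist elements x, y₀, …, y_{n-1} of G with y₀ < y₁ < … < y_{n-1} and x incomparable to every y_i, if and only if there exist elements x₀ < x₁ < … < x_q and y₀ < y₁ < … < y_{p-1} of G with every x_i incomparable to every y_j. -/
namespace ThrPaper

universe u

variable {X : Type*}

/-- The strict order associated to a reflexive relation `le`. -/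
def Lt (le : X → X → Prop) (x y : X) : Prop := le x y ∧ ¬ le y x

/-- `x` and `y` are incomparable with respect to `le`. -/
def Incomp (le : X → X → Prop) (x y : X) : Prop := ¬ le x y ∧ ¬ le y x

/-- `le` is a partial order (reflexive, transitive, antisymmetric). -/
def IsPartialOrderRel (le : X → X → Prop) : Prop :=
  (∀ x, le x x) ∧ (∀ x y z, le x y → le y z → le x z) ∧ ∀ x y, le x y → le y x → x = y

/-- `le` is total. -/
def IsTotalRel (le : X → X → Prop) : Prop := ∀ x y, le x y ∨ le y x

/-- Compatibility of a relation with the (not necessarily abelian) group operation. -/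
def IsCompat {G : Type*} [AddGroup G] (le : G → G → Prop) : Prop :=
  ∀ a b x y : G, le x y → le (a + x + b) (a + y + b)

/-- The trace quasi-order `≤_pred`: `x ≤_pred y` iff every `z < x` satisfies `z < y`. -/
def PredLe (le : X → X → Prop) (x y : X) : Prop := ∀ z, Lt le z x → Lt le z y

/-- The trace quasi-order `≤_succ`: `x ≤_succ y` iff every `z > y` satisfies `z > x`. -/
def SuccLe (le : X → X → Prop) (x y : X) : Prop := ∀ z, Lt le y z → Lt le x z

/-- `le` is a threshold order: `≤_pred` and `≤_succ` are equal and are total orders. -/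
def IsThresholdOrder (le : X → X → Prop) : Prop :=
  (∀ x y, PredLe le x y ↔ SuccLe le x y) ∧
  (∀ x y, PredLe le x y ∨ PredLe le y x) ∧
  ∀ x y, PredLe le x y → PredLe le y x → x = y

/-- The poset `2 ⊕ 2` embeds into `le`. -/
def Embeds2p2 (le : X → X → Prop) : Prop :=
  ∃ a b c d : X, Lt le a b ∧ Lt le c d ∧
    Incomp le a c ∧ Incomp le a d ∧ Incomp le b c ∧ Incomp le b d

/-- The poset `3 ⊕ 1` embeds into `le`. -/
def Embeds3p1 (le : X → X → Prop) : Prop :=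
  ∃ a b c d : X, Lt le a b ∧ Lt le b c ∧ Incomp le d a ∧ Incomp le d b ∧ Incomp le d c

/-- The poset `1 ⊕ 2` embeds into `le`. -/
def Embeds1p2 (le : X → X → Prop) : Prop :=
  ∃ a b c : X, Lt le a b ∧ Incomp le c a ∧ Incomp le c b

section Helpers

variable {G : Type*} [AddGroup G] {le : G → G → Prop}

lemma le_left' (hc : IsCompat le) (a x y : G) (h : le x y) : le (a + x) (a + y) := by
  simpa using hc a 0 x y h

lemma le_of_le_left' (hc : IsCompat le) (a x y : G) (h : le (a + x) (a + y)) : le x y := by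
  simpa [add_assoc] using hc (-a) 0 _ _ h

lemma lt_left' (hc : IsCompat le) (a x y : G) (h : Lt le x y) : Lt le (a + x) (a + y) :=
  ⟨le_left' hc a x y h.1, fun hcon => h.2 (le_of_le_left' hc a y x hcon)⟩

lemma neg_le_neg' (hc : IsCompat le) {x y : G} (h : le x y) : le (-y) (-x) := by
  simpa [add_assoc] using hc (-y) (-x) _ _ h

lemma lt_le_trans' (hpo : IsPartialOrderRel le) {x y z : G} (h1 : Lt le x y) (h2 : le y z) :
    Lt le x z :=
  ⟨hpo.2.1 _ _ _ h1.1 h2, fun hcon => h1.2 (hpo.2.1 _ _ _ h2 hcon)⟩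

end Helpers

/-- For an ordered group `G`, `n ≥ 2`, `p, q ≥ 1` with `n = p + q`:
`G` embeds `1 ⊕ n` iff `G` embeds `(q+1) ⊕ p`. -/
theorem orderedGroup_embeds_one_plus_n_iff {G : Type*} [AddGroup G] (le : G → G → Prop)
    (hpo : IsPartialOrderRel le) (hc : IsCompat le)
    (n p q : ℕ) (hn : 2 ≤ n) (hp : 1 ≤ p) (hq : 1 ≤ q) (hpq : n = p + q) :
    (∃ (x : G) (y : Fin n → G),
        (∀ i j : Fin n, i < j → Lt le (y i) (y j)) ∧ ∀ i : Fin n, Incomp le x (y i)) ↔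
    (∃ (u : Fin (q + 1) → G) (v : Fin p → G),
        (∀ i j : Fin (q + 1), i < j → Lt le (u i) (u j)) ∧
        (∀ i j : Fin p, i < j → Lt le (v i) (v j)) ∧
        ∀ (i : Fin (q + 1)) (j : Fin p), Incomp le (u i) (v j)) := by
  have trans := hpo.2.1
  constructor
  · rintro ⟨x, y, hch, hinc⟩
    have ley : ∀ a b : Fin n, a.val ≤ b.val → le (y a) (y b) := by
      intro a b hab
      rcases eq_or_lt_of_le hab with h | h
      · have : a = b := Fin.ext h
        subst this; exact hpo.1 _
      · exact (hch a b h).1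
    refine ⟨fun i => -y ⟨0, by omega⟩ + y ⟨i.val, by have := i.isLt; omega⟩,
            fun j => -x + y ⟨q + j.val, by have := j.isLt; omega⟩, ?_, ?_, ?_⟩
    · intro i j hij
      dsimp only
      exact lt_left' hc _ _ _ (hch _ _ (show (⟨i.val, _⟩ : Fin n) < ⟨j.val, _⟩ from hij))
    · intro i j hij
      dsimp only
      refine lt_left' hc _ _ _ (hch _ _ ?_)
      have : i.val < j.val := hij
      exact Fin.mk_lt_mk.mpr (by omega)
    · intro i j
      dsimp only
      constructor
      · intro h
        have h1 : le 0 (-y ⟨0, by omega⟩ + y ⟨i.val, by have := i.isLt; omega⟩) := by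
          simpa [add_assoc] using hc (-y ⟨0, by omega⟩) 0 _ _
            (ley ⟨0, by omega⟩ ⟨i.val, by have := i.isLt; omega⟩ (Nat.zero_le _))
        have h2 : le 0 (-x + y ⟨q + j.val, by have := j.isLt; omega⟩) := trans _ _ _ h1 h
        have h3 : le x (y ⟨q + j.val, by have := j.isLt; omega⟩) := by
          simpa [add_assoc] using hc x 0 _ _ h2
        exact (hinc _).1 h3
      · intro h
        have h1 : le (-y ⟨0, by omega⟩ + y ⟨i.val, by have := i.isLt; omega⟩)
            (-y ⟨0, by omega⟩ + y ⟨q + j.val, by have := j.isLt; omega⟩) :=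
          le_left' hc _ _ _ (ley _ _ (by have := i.isLt; simp; omega))
        have h2 := trans _ _ _ h h1
        have h3 : le (-x) (-y ⟨0, by omega⟩) := by
          simpa [add_assoc] using hc 0 (-y ⟨q + j.val, by have := j.isLt; omega⟩) _ _ h2
        have h4 : le (y ⟨0, by omega⟩) x := by
          simpa [add_assoc] using hc (y ⟨0, by omega⟩) x _ _ h3
        exact (hinc _).2 h4
  · rintro ⟨u, v, hu, hv, hinc⟩
    have leu : ∀ a b : Fin (q + 1), a.val ≤ b.val → le (u a) (u b) := by
      intro a b hab
      rcases eq_or_lt_of_le hab with h | h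
      · have : a = b := Fin.ext h
        subst this; exact hpo.1 _
      · exact (hu a b h).1
    have lev : ∀ a b : Fin p, a.val ≤ b.val → le (v a) (v b) := by
      intro a b hab
      rcases eq_or_lt_of_le hab with h | h
      · have : a = b := Fin.ext h
        subst this; exact hpo.1 _
      · exact (hv a b h).1
    refine ⟨u ⟨0, by omega⟩,
      fun k => if h : k.val < q then
          v ⟨0, hp⟩ + (-u ⟨q, by omega⟩ + u ⟨k.val, by omega⟩)
        else v ⟨k.val - q, by have := k.isLt; omega⟩, ?_, ?_⟩
    · intro i j hij
      dsimp only
      have hij' : i.val < j.val := hij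
      by_cases hi : i.val < q <;> by_cases hj : j.val < q
      · rw [dif_pos hi, dif_pos hj]
        exact lt_left' hc _ _ _ (lt_left' hc _ _ _ (hu _ _ (Fin.mk_lt_mk.mpr hij')))
      · rw [dif_pos hi, dif_neg hj]
        have h1 : Lt le (v ⟨0, hp⟩ + (-u ⟨q, by omega⟩ + u ⟨i.val, by omega⟩)) (v ⟨0, hp⟩) := by
          have := lt_left' hc (v ⟨0, hp⟩) _ _
            (lt_left' hc (-u ⟨q, by omega⟩) _ _ (hu ⟨i.val, by omega⟩ ⟨q, by omega⟩
              (Fin.mk_lt_mk.mpr hi)))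
          simpa using this
        exact lt_le_trans' hpo h1 (lev _ _ (Nat.zero_le _))
      · omega
      · rw [dif_neg hi, dif_neg hj]
        exact hv _ _ (Fin.mk_lt_mk.mpr (by omega))
    · intro k
      dsimp only
      by_cases hk : k.val < q
      · rw [dif_pos hk]
        constructor
        · intro h
          have h2 : le (u ⟨0, by omega⟩ + (-u ⟨k.val, by omega⟩ + u ⟨q, by omega⟩)) (v ⟨0, hp⟩) := by
            simpa [add_assoc] using hc 0 (-u ⟨k.val, by omega⟩ + u ⟨q, by omega⟩) _ _ h
          have h3 : le (u ⟨0, by omega⟩)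
              (u ⟨0, by omega⟩ + (-u ⟨k.val, by omega⟩ + u ⟨q, by omega⟩)) := by
            simpa [add_assoc] using hc (u ⟨0, by omega⟩ + -u ⟨k.val, by omega⟩) 0 _ _
              (leu ⟨k.val, by omega⟩ ⟨q, by omega⟩ (by simp only [Fin.val_mk]; omega))
          exact (hinc ⟨0, by omega⟩ ⟨0, hp⟩).1 (trans _ _ _ h3 h2)
        · intro h
          have h2 : le (v ⟨0, hp⟩) (u ⟨0, by omega⟩ + (-u ⟨k.val, by omega⟩ + u ⟨q, by omega⟩)) := by
            simpa [add_assoc] using hc 0 (-u ⟨k.val, by omega⟩ + u ⟨q, by omega⟩) _ _ h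
          have hneg : le (-u ⟨k.val, by omega⟩) (-u ⟨0, by omega⟩) :=
            neg_le_neg' hc (leu ⟨0, by omega⟩ ⟨k.val, by omega⟩ (Nat.zero_le _))
          have h3 : le (u ⟨0, by omega⟩ + (-u ⟨k.val, by omega⟩ + u ⟨q, by omega⟩))
              (u ⟨q, by omega⟩) := by
            simpa [add_assoc] using hc (u ⟨0, by omega⟩) (u ⟨q, by omega⟩) _ _ hneg
          exact (hinc ⟨q, by omega⟩ ⟨0, hp⟩).2 (trans _ _ _ h2 h3)
      · rw [dif_neg hk]
        exact hinc ⟨0, by omega⟩ _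

end ThrPaper
end

section
/- The partial order of an ordered group is an interval order if and only if it is a semiorder. That is, for a group G with a compatible partial order ≤: ≤ does not embed 2 ⊕ 2 if and only if ≤ embeds neither 2 ⊕ 2 nor 3 ⊕ 1. -/
namespace ThrPaper

universe u

variable {X : Type*}

/-- The order of an ordered group is an interval order iff it is a semiorder. -/
theorem orderedGroup_intervalOrder_iff_semiorder {G : Type*} [AddGroup G] (le : G → G → Prop)
    (hpo : IsPartialOrderRel le) (hc : IsCompat le) :
    ¬ Embeds2p2 le ↔ (¬ Embeds2p2 le ∧ ¬ Embeds3p1 le) := by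
  obtain ⟨hrefl, htrans, -⟩ := hpo
  have monoL : ∀ s u v : G, le u v → le (s + u) (s + v) := fun s u v h => by
    simpa using hc s 0 u v h
  have monoR : ∀ s u v : G, le u v → le (u + s) (v + s) := fun s u v h => by
    simpa using hc 0 s u v h
  constructor
  · intro h22
    refine ⟨h22, ?_⟩
    rintro ⟨x, y, z, w, hxy, hyz, hwx, hwy, hwz⟩
    set t := -x + y with ht
    apply h22
    refine ⟨y, z, w, w + t, hyz, ?_, ⟨hwy.2, hwy.1⟩, ?_, ⟨hwz.2, hwz.1⟩, ?_⟩
    · constructor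
      · have h0 : le 0 t := by simpa using monoL (-x) x y hxy.1
        simpa using monoL w 0 t h0
      · intro hdw
        have h1 : le t 0 := by
          have := monoL (-w) _ _ hdw
          simpa [← add_assoc] using this
        have h2 : le (x + t) (x + 0) := monoL x _ _ h1
        simp only [ht, add_neg_cancel_left, add_zero] at h2
        exact hxy.2 h2
    · constructor
      · intro hyd
        have h1 : le (y + (-y + x)) (w + t + (-y + x)) := monoR _ _ _ hyd
        have h2 : le x w := by
          simpa [ht, add_assoc] using h1
        exact hwx.2 h2
      · intro hdy
        have h1 : le (w + t + (-y + x)) (y + (-y + x)) := monoR _ _ _ hdy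
        have h2 : le w x := by
          simpa [ht, add_assoc] using h1
        exact hwx.1 h2
    · constructor
      · intro hzd
        have h1 : le (z + (-y + x)) w := by
          have := monoR (-y + x) _ _ hzd
          simpa [ht, add_assoc] using this
        have h2 : le x (z + (-y + x)) := by
          have h0 : le 0 (z + -y) := by simpa using monoR (-y) y z hyz.1
          have := monoR x _ _ h0
          simpa [add_assoc] using this
        exact hwx.2 (htrans _ _ _ h2 h1)
      · intro hdz
        have h1 : le w (z + (-y + x)) := by
          have := monoR (-y + x) _ _ hdz
          simpa [ht, add_assoc] using this
        have h2 : le (z + (-y + x)) z := by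
          have h0 : le (-y + x) 0 := by simpa using monoL (-y) x y hxy.1
          have := monoL z _ _ h0
          simpa using this
        exact hwz.1 (htrans _ _ _ h1 h2)
  · exact fun h => h.1

end ThrPaper
end

section
/- A partial order ≤ on a set X is a semiorder if and only if for every pair of incomparable elements a, b of X, either the pair (a,b) or the pair (b,a) is critical, where a pair (x,y) of incomparable elements is critical if D(x) ⊆ D(y) and U(y) ⊆ U(x), with D(u) = {v ∈ X : v < u} and U(u) = {v ∈ X : u < v}. -/
namespace ThrPaper

universe u

variable {X : Type*}

/-- A pair `(x, y)` of incomparable elements is critical if `D(x) ⊆ D(y)` and `U(y) ⊆ U(x)`,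
where `D(u) = {v | v < u}` and `U(u) = {v | u < v}`. -/
def Critical (le : X → X → Prop) (x y : X) : Prop :=
  Incomp le x y ∧ (∀ v, Lt le v x → Lt le v y) ∧ ∀ v, Lt le y v → Lt le x v

/-- A partial order is a semiorder iff for every incomparable pair `a, b`,
the pair `(a, b)` or the pair `(b, a)` is critical. -/
theorem semiorder_iff_critical_pairs {X : Type*} (le : X → X → Prop)
    (hpo : IsPartialOrderRel le) :
    (¬ Embeds2p2 le ∧ ¬ Embeds3p1 le) ↔
      ∀ a b : X, Incomp le a b → (Critical le a b ∨ Critical le b a) := by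
  obtain ⟨hrefl, htrans, hanti⟩ := hpo
  -- basic facts
  have lt_le : ∀ {x y z}, Lt le x y → le y z → Lt le x z := by
    rintro x y z ⟨h1, h2⟩ h3
    exact ⟨htrans _ _ _ h1 h3, fun h => h2 (htrans _ _ _ h3 h)⟩
  have le_lt : ∀ {x y z}, le x y → Lt le y z → Lt le x z := by
    rintro x y z h1 ⟨h2, h3⟩
    exact ⟨htrans _ _ _ h1 h2, fun h => h3 (htrans _ _ _ h h1)⟩
  -- from ¬ Lt v b, v < a, Incomp a b, get Incomp v b
  have downIncomp : ∀ {v a b}, Lt le v a → Incomp le a b → ¬ Lt le v b → Incomp le v b := by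
    intro v a b hva hab hnvb
    have hbv : ¬ le b v := fun h => hab.2 (le_lt h hva).1
    exact ⟨fun h => hnvb ⟨h, hbv⟩, hbv⟩
  -- from ¬ Lt a u, b < u, Incomp a b, get Incomp a u
  have upIncomp : ∀ {u a b}, Lt le b u → Incomp le a b → ¬ Lt le a u → Incomp le a u := by
    intro u a b hbu hab hnau
    have hua : ¬ le u a := fun h => hab.2 (lt_le hbu h).1
    exact ⟨fun h => hnau ⟨h, hua⟩, hua⟩
  constructor
  · rintro ⟨h22, h31⟩ a b hab
    by_contra hc
    push_neg at hc
    obtain ⟨hcab, hcba⟩ := hc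
    have hba : Incomp le b a := ⟨hab.2, hab.1⟩
    -- failure of Critical a b
    have Hab : (∃ v, Lt le v a ∧ ¬ Lt le v b) ∨ (∃ u, Lt le b u ∧ ¬ Lt le a u) := by
      by_contra h
      push_neg at h
      exact hcab ⟨hab, h.1, h.2⟩
    have Hba : (∃ v, Lt le v b ∧ ¬ Lt le v a) ∨ (∃ u, Lt le a u ∧ ¬ Lt le b u) := by
      by_contra h
      push_neg at h
      exact hcba ⟨hba, h.1, h.2⟩
    rcases Hab with ⟨v, hva, hnvb⟩ | ⟨u, hbu, hnau⟩
    · have hvb : Incomp le v b := downIncomp hva hab hnvb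
      rcases Hba with ⟨w, hwb, hnwa⟩ | ⟨w, haw, hnbw⟩
      · -- 2⊕2 : v < a, w < b
        have hwa : Incomp le w a := downIncomp hwb hba hnwa
        have hvw : Incomp le v w := by
          constructor
          · intro h
            exact hvb.1 (htrans _ _ _ h hwb.1)
          · intro h
            exact hwa.1 (htrans _ _ _ h hva.1)
        exact h22 ⟨v, a, w, b, hva, hwb, hvw, hvb, ⟨hwa.2, hwa.1⟩, hab⟩
      · -- 3⊕1 : v < a < w, b incomparable to all
        have hbw : Incomp le b w := upIncomp haw hba hnbw
        exact h31 ⟨v, a, w, b, hva, haw, ⟨hvb.2, hvb.1⟩, hba, hbw⟩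
    · have hau : Incomp le a u := upIncomp hbu hab hnau
      rcases Hba with ⟨w, hwb, hnwa⟩ | ⟨w, haw, hnbw⟩
      · -- 3⊕1 : w < b < u, a incomparable to all
        have hwa : Incomp le w a := downIncomp hwb hba hnwa
        exact h31 ⟨w, b, u, a, hwb, hbu, ⟨hwa.2, hwa.1⟩, hab, hau⟩
      · -- 2⊕2 : a < w, b < u
        have hbw : Incomp le b w := upIncomp haw hba hnbw
        have hwu : Incomp le w u := by
          constructor
          · intro h
            exact hau.1 (htrans _ _ _ haw.1 h)
          · intro h
            exact hbw.1 (htrans _ _ _ hbu.1 h)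
        exact h22 ⟨a, w, b, u, haw, hbu, hab, hau, ⟨hbw.2, hbw.1⟩, hwu⟩
  · intro hcrit
    constructor
    · rintro ⟨a, b, c, d, hab, hcd, hac, had, hbc, hbd⟩
      rcases hcrit a c hac with h | h
      · exact had.1 (h.2.2 d hcd).1
      · exact hbc.2 (h.2.2 b hab).1
    · rintro ⟨a, b, c, d, hab, hbc, hda, hdb, hdc⟩
      rcases hcrit d b hdb with h | h
      · exact hdc.1 (h.2.2 c hbc).1
      · exact hda.2 (h.2.1 a hab).1

end ThrPaper
end

section
/- Let (X, +, ≼) be a group equipped with a compatible total order ≼ and let α be a central element of the group with 0 ≼ α. Define x ≤_α y iff x = y or α ≼ y − x, and x ≤_α̌ y iff x = y or α ≺ y − x. Then (X, +, ≤_α) and (X, +, ≤_α̌) are threshold groups: ≤_α and ≤_α̌ are compatible partial orders whose trace quasi-orders ≤_pred and ≤_succ are equal total orders. -/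
namespace ThrPaper

universe u

variable {X : Type*}

/-- If `(X, +, ≼)` is a totally ordered group and `α` a positive central
element, then the orders `≤_α` (`x ≤ y` iff `x = y` or `α ≼ y - x`) and `≤_α̌`
(`x ≤ y` iff `x = y` or `α ≺ y - x`) make `X` a threshold group. -/
theorem threshold_of_central_threshold {G : Type*} [AddGroup G] (ple : G → G → Prop)
    (hpo : IsPartialOrderRel ple) (htot : IsTotalRel ple) (hc : IsCompat ple)
    (α : G) (hcentral : ∀ g : G, α + g = g + α) (hpos : ple 0 α)
    (lea leb : G → G → Prop)
    (hlea : ∀ x y : G, lea x y ↔ (x = y ∨ ple α (y - x)))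
    (hleb : ∀ x y : G, leb x y ↔ (x = y ∨ Lt ple α (y - x))) :
    (IsPartialOrderRel lea ∧ IsCompat lea ∧ IsThresholdOrder lea) ∧
    (IsPartialOrderRel leb ∧ IsCompat leb ∧ IsThresholdOrder leb) := by
  obtain ⟨hrefl, htrans, hanti⟩ := hpo
  -- basic monotonicity facts
  have hcl : ∀ (a u v : G), ple u v → ple (a + u) (a + v) := fun a u v h => by
    simpa using hc a 0 u v h
  have hcr : ∀ (b u v : G), ple u v → ple (u + b) (v + b) := fun b u v h => by
    simpa using hc 0 b u v h
  have hcancel : ∀ (a u v : G), ple (a + u) (a + v) → ple u v := fun a u v h => by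
    simpa using hcl (-a) _ _ h
  have hmono2 : ∀ u v s t : G, ple u v → ple s t → ple (u + s) (v + t) :=
    fun u v s t h1 h2 => htrans _ _ _ (hcr s u v h1) (hcl v s t h2)
  have hsub1 : ∀ x y : G, ple x y → ple 0 (y - x) := fun x y h => by
    simpa [sub_eq_add_neg] using hcr (-x) x y h
  have hsub2 : ∀ x y : G, ple 0 (y - x) → ple x y := fun x y h => by
    simpa [sub_eq_add_neg, add_assoc] using hcr x 0 (y - x) h
  have hsub3 : ∀ x y : G, ple (x - y) 0 → ple x y := fun x y h => by
    simpa [sub_eq_add_neg, add_assoc] using hcr y (x - y) 0 h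
  have hsub4 : ∀ x y : G, ple x y → ple (x - y) 0 := fun x y h => by
    simpa [sub_eq_add_neg] using hcr (-y) x y h
  have h0le : ∀ u, ple α u → ple 0 u := fun u h => htrans _ _ _ hpos h
  have keyadd : ∀ u v, ple α u → ple 0 v → ple α (u + v) := fun u v h1 h2 => by
    have := hcl u 0 v h2
    simp only [add_zero] at this
    exact htrans _ _ _ h1 this
  have keyadd' : ∀ u v, ple 0 u → ple α v → ple α (u + v) := fun u v h1 h2 => by
    have := hcr v 0 u h1
    simp only [zero_add] at this
    exact htrans _ _ _ h2 this
  have hα2 : ∀ u v, ple α u → ple α v → ple α (u + v) := fun u v h1 h2 =>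
    keyadd u v h1 (h0le v h2)
  have hαα : ple α (α + α) := by
    have := hcl α 0 α hpos
    simpa using this
  have hnegle : ple (-α) 0 := by
    simpa using hcl (-α) 0 α hpos
  -- centrality helpers
  have hconj : ∀ a : G, a + α + -a = α := fun a => by
    rw [← hcentral a, add_neg_cancel_right]
  have hnegcen : ∀ g : G, -α + g = g + -α := by
    intro g
    have := congrArg Neg.neg (hcentral (-g))
    simpa [neg_add_rev] using this.symm
  -- group identities
  have esub : ∀ x y z : G, (y - x) + (x - z) = y - z := fun x y z => by
    simp [sub_eq_add_neg, add_assoc]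
  have e1 : ∀ x : G, x - (x - α) = α := fun x => by
    rw [sub_eq_add_neg, sub_eq_add_neg, neg_add_rev, neg_neg, ← add_assoc, ← hcentral x,
      add_assoc]
    simp
  have e2 : ∀ x : G, (x - α) - x = -α := fun x => by
    rw [sub_eq_add_neg, sub_eq_add_neg, add_assoc, hnegcen (-x), ← add_assoc]
    simp
  have e3 : ∀ x y : G, y - (x - α) = α + (y - x) := fun x y => by
    rw [sub_eq_add_neg, sub_eq_add_neg, neg_add_rev, neg_neg, ← add_assoc, ← hcentral y,
      add_assoc, ← sub_eq_add_neg]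
  have e4 : ∀ x y : G, (x + α) - y = α + (x - y) := fun x y => by
    rw [sub_eq_add_neg, ← hcentral x, add_assoc, ← sub_eq_add_neg]
  have e5 : ∀ x : G, (x + α) - x = α := fun x => by
    rw [sub_eq_add_neg, ← hcentral x, add_assoc]
    simp
  have e6 : ∀ x y : G, y - (x + α) = (y - x) - α := fun x y => by
    rw [sub_eq_add_neg, neg_add_rev, ← add_assoc, add_assoc, hnegcen (-x), ← add_assoc]
    simp [sub_eq_add_neg]
  have e7 : ∀ x y : G, (y - α) - x = (y - x) - α := fun x y => by
    rw [sub_eq_add_neg y α, sub_eq_add_neg, add_assoc, hnegcen (-x), ← add_assoc,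
      ← sub_eq_add_neg, ← sub_eq_add_neg]
  have econj : ∀ a b x y : G, (a + y + b) - (a + x + b) = a + (y - x) + -a := fun a b x y => by
    rw [sub_eq_add_neg, neg_add_rev, neg_add_rev, sub_eq_add_neg]
    simp [add_assoc]
  -- α ≤ -α is impossible unless α ≤ 0
  have hneg : ¬ ple α 0 → ¬ ple α (-α) := by
    intro h0 h
    have h1 : ple (α + α) 0 := by simpa using hcr α α (-α) h
    exact h0 (htrans _ _ _ hαα h1)
  have hconjcancel : ∀ a u v : G, ple (a + u + -a) (a + v + -a) → ple u v := by
    intro a u v h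
    have := hc (-a) a _ _ h
    simpa [add_assoc] using this
  ------------------------------------------------------------------
  -- characterizations of the strict orders
  ------------------------------------------------------------------
  have ltlea : ∀ x y : G, Lt lea x y ↔ (ple α (y - x) ∧ ¬ ple α (x - y)) := by
    intro x y
    unfold Lt
    rw [hlea, hlea]
    constructor
    · rintro ⟨h1, h2⟩
      have h2a : y ≠ x := fun h => h2 (Or.inl h)
      have h2b : ¬ ple α (x - y) := fun h => h2 (Or.inr h)
      rcases h1 with rfl | h1
      · exact absurd rfl h2a
      · exact ⟨h1, h2b⟩
    · rintro ⟨h1, h2⟩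
      have hne : x ≠ y := by
        rintro rfl
        exact h2 h1
      refine ⟨Or.inr h1, ?_⟩
      rintro (rfl | h3)
      · exact hne rfl
      · exact h2 h3
  have ltleb : ∀ x y : G, Lt leb x y ↔ (Lt ple α (y - x) ∧ ¬ Lt ple α (x - y)) := by
    intro x y
    unfold Lt
    rw [hleb, hleb]
    constructor
    · rintro ⟨h1, h2⟩
      have h2a : y ≠ x := fun h => h2 (Or.inl h)
      have h2b : ¬ Lt ple α (x - y) := fun h => h2 (Or.inr h)
      rcases h1 with rfl | h1
      · exact absurd rfl h2a
      · exact ⟨h1, h2b⟩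
    · rintro ⟨h1, h2⟩
      have hne : x ≠ y := by
        rintro rfl
        exact h2 h1
      refine ⟨Or.inr h1, ?_⟩
      rintro (rfl | h3)
      · exact hne rfl
      · exact h2 h3
  ------------------------------------------------------------------
  -- trace orders of lea
  ------------------------------------------------------------------
  have predlea : ∀ x y : G, PredLe lea x y ↔ ple x y := by
    intro x y
    constructor
    · intro hp
      by_contra hxy
      have hyx : ple y x := (htot x y).resolve_left hxy
      by_cases h0 : ple α 0
      · have hlt : Lt lea y x := (ltlea y x).2 ⟨htrans _ _ _ h0 (hsub1 y x hyx),
          fun h => hxy (hsub2 x y (h0le _ h))⟩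
        have := (ltlea y y).1 (hp y hlt)
        rw [sub_self] at this
        exact this.2 this.1
      · have hlt : Lt lea (x - α) x := (ltlea (x - α) x).2
          ⟨by rw [e1]; exact hrefl α, by rw [e2]; exact hneg h0⟩
        have h1 := ((ltlea (x - α) y).1 (hp _ hlt)).1
        rw [e3] at h1
        have : ple (α + 0) (α + (y - x)) := by simpa using h1
        exact hxy (hsub2 x y (hcancel α 0 (y - x) this))
    · intro hxy z hz
      rw [ltlea] at hz ⊢
      obtain ⟨h1, h2⟩ := hz
      constructor
      · have := keyadd' (y - x) (x - z) (hsub1 x y hxy) h1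
        rwa [esub] at this
      · intro h3
        have := keyadd (z - y) (y - x) h3 (hsub1 x y hxy)
        rw [esub y z x] at this
        exact h2 this
  have succlea : ∀ x y : G, SuccLe lea x y ↔ ple x y := by
    intro x y
    constructor
    · intro hp
      by_contra hxy
      have hyx : ple y x := (htot x y).resolve_left hxy
      by_cases h0 : ple α 0
      · have hlt : Lt lea y x := (ltlea y x).2 ⟨htrans _ _ _ h0 (hsub1 y x hyx),
          fun h => hxy (hsub2 x y (h0le _ h))⟩
        have := (ltlea x x).1 (hp x hlt)
        rw [sub_self] at this
        exact this.2 this.1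
      · have hlt : Lt lea y (y + α) := (ltlea y (y + α)).2
          ⟨by rw [e5]; exact hrefl α, by rw [e6, sub_self, zero_sub]; exact hneg h0⟩
        have h1 := ((ltlea x (y + α)).1 (hp _ hlt)).1
        rw [e4] at h1
        have : ple (α + 0) (α + (y - x)) := by simpa using h1
        exact hxy (hsub2 x y (hcancel α 0 (y - x) this))
    · intro hxy z hz
      rw [ltlea] at hz ⊢
      obtain ⟨h1, h2⟩ := hz
      constructor
      · have := keyadd (z - y) (y - x) h1 (hsub1 x y hxy)
        rwa [esub y z x] at this
      · intro h3
        have := keyadd' (y - x) (x - z) (hsub1 x y hxy) h3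
        rw [esub] at this
        exact h2 this
  ------------------------------------------------------------------
  -- trace orders of leb
  ------------------------------------------------------------------
  have predleb : ∀ x y : G, PredLe leb x y ↔ ple x y := by
    intro x y
    constructor
    · intro hp
      by_contra hxy
      have hyx : ple y x := (htot x y).resolve_left hxy
      have hxy0 : ple 0 (x - y) := hsub1 y x hyx
      have hyx0 : ple (y - x) 0 := hsub4 y x hyx
      have hlt : Lt leb (y - α) x := by
        rw [ltleb, e3 y x, e7]
        refine ⟨⟨by simpa using hcl α 0 (x - y) hxy0, ?_⟩, ?_⟩
        · intro h
          have : ple (α + (x - y)) (α + 0) := by simpa using h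
          exact hxy (hsub3 x y (hcancel α (x - y) 0 this))
        · rintro ⟨-, h⟩
          refine h (htrans _ _ _ ?_ hpos)
          refine htrans _ _ _ ?_ hnegle
          simpa [sub_eq_add_neg] using hcr (-α) (y - x) 0 hyx0
      have := (ltleb (y - α) y).1 (hp _ hlt)
      rw [e1 y] at this
      exact this.1.2 (hrefl α)
    · intro hxy z hz
      rw [ltleb] at hz ⊢
      obtain ⟨⟨h1a, h1b⟩, h2⟩ := hz
      have hxz_le : ple (x - z) (y - z) := by
        have := hcr (x - z) 0 (y - x) (hsub1 x y hxy)
        simpa [esub] using this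
      constructor
      · exact ⟨htrans _ _ _ h1a hxz_le, fun h => h1b (htrans _ _ _ hxz_le h)⟩
      · rintro ⟨h3a, h3b⟩
        have hzy_le : ple (z - y) (z - x) := by
          have := hcl (z - y) 0 (y - x) (hsub1 x y hxy)
          simpa [esub y z x] using this
        have h4 : ple α (z - x) := htrans _ _ _ h3a hzy_le
        have h5 : ple (z - x) α := by
          by_contra h5
          exact h2 ⟨h4, h5⟩
        exact h3b (htrans _ _ _ hzy_le h5)
  have succleb : ∀ x y : G, SuccLe leb x y ↔ ple x y := by
    intro x y
    constructor
    · intro hp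
      by_contra hxy
      have hyx : ple y x := (htot x y).resolve_left hxy
      have hxy0 : ple 0 (x - y) := hsub1 y x hyx
      have hyx0 : ple (y - x) 0 := hsub4 y x hyx
      have hlt : Lt leb y (x + α) := by
        rw [ltleb, e4, e6]
        refine ⟨⟨by simpa using hcl α 0 (x - y) hxy0, ?_⟩, ?_⟩
        · intro h
          have : ple (α + (x - y)) (α + 0) := by simpa using h
          exact hxy (hsub3 x y (hcancel α (x - y) 0 this))
        · rintro ⟨-, h⟩
          refine h (htrans _ _ _ ?_ hpos)
          refine htrans _ _ _ ?_ hnegle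
          simpa [sub_eq_add_neg] using hcr (-α) (y - x) 0 hyx0
      have := (ltleb x (x + α)).1 (hp _ hlt)
      rw [e5 x] at this
      exact this.1.2 (hrefl α)
    · intro hxy z hz
      rw [ltleb] at hz ⊢
      obtain ⟨⟨h1a, h1b⟩, h2⟩ := hz
      have hzy_le : ple (z - y) (z - x) := by
        have := hcl (z - y) 0 (y - x) (hsub1 x y hxy)
        simpa [esub y z x] using this
      constructor
      · exact ⟨htrans _ _ _ h1a hzy_le, fun h => h1b (htrans _ _ _ hzy_le h)⟩
      · rintro ⟨h3a, h3b⟩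
        have hxz_le : ple (x - z) (y - z) := by
          have := hcr (x - z) 0 (y - x) (hsub1 x y hxy)
          simpa [esub] using this
        have h4 : ple α (y - z) := htrans _ _ _ h3a hxz_le
        have h5 : ple (y - z) α := by
          by_contra h5
          exact h2 ⟨h4, h5⟩
        exact h3b (htrans _ _ _ hxz_le h5)
  ------------------------------------------------------------------
  -- partial orders and compatibility
  ------------------------------------------------------------------
  have poa : IsPartialOrderRel lea := by
    refine ⟨fun x => (hlea x x).2 (Or.inl rfl), ?_, ?_⟩
    · intro x y z h1 h2
      rw [hlea] at h1 h2 ⊢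
      rcases h1 with rfl | h1
      · exact h2
      rcases h2 with rfl | h2
      · exact Or.inr h1
      right
      have := hα2 (z - y) (y - x) h2 h1
      rwa [esub y z x] at this
    · intro x y h1 h2
      rw [hlea] at h1 h2
      rcases h1 with rfl | h1
      · rfl
      rcases h2 with rfl | h2
      · rfl
      have h3 : ple (α + α) 0 := by
        have := hmono2 _ _ _ _ h1 h2
        rw [esub x y y, sub_self] at this
        exact this
      have hα0 : α = 0 := hanti _ _ (htrans _ _ _ hαα h3) hpos
      rw [hα0] at h1 h2
      exact hanti x y (hsub2 x y h1) (hsub2 y x h2)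
  have compata : IsCompat lea := by
    intro a b x y h
    rw [hlea] at h ⊢
    rcases h with rfl | h
    · exact Or.inl rfl
    right
    rw [econj]
    have := hc a (-a) α (y - x) h
    rwa [hconj] at this
  have pob : IsPartialOrderRel leb := by
    refine ⟨fun x => (hleb x x).2 (Or.inl rfl), ?_, ?_⟩
    · intro x y z h1 h2
      rw [hleb] at h1 h2 ⊢
      rcases h1 with rfl | ⟨h1a, h1b⟩
      · exact h2
      rcases h2 with rfl | ⟨h2a, h2b⟩
      · exact Or.inr ⟨h1a, h1b⟩
      right
      constructor
      · have := hα2 (z - y) (y - x) h2a h1a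
        rwa [esub y z x] at this
      · intro h3
        have hzy : ple (z - y) (z - x) := by
          have := hcl (z - y) 0 (y - x) (h0le _ h1a)
          simpa [esub y z x] using this
        exact h2b (htrans _ _ _ hzy h3)
    · intro x y h1 h2
      rw [hleb] at h1 h2
      rcases h1 with rfl | ⟨h1a, h1b⟩
      · rfl
      rcases h2 with rfl | ⟨h2a, h2b⟩
      · rfl
      have h3 : ple (α + α) 0 := by
        have := hmono2 _ _ _ _ h1a h2a
        rw [esub x y y, sub_self] at this
        exact this
      have hα0 : α = 0 := hanti _ _ (htrans _ _ _ hαα h3) hpos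
      exfalso
      have h4 : ple (y - x) 0 := by
        have := hcl (y - x) 0 (x - y) (h0le _ h2a)
        simpa [esub x y y, sub_self] using this
      exact h1b (by rw [hα0]; exact h4)
  have compatb : IsCompat leb := by
    intro a b x y h
    rw [hleb] at h ⊢
    rcases h with rfl | ⟨ha, hb⟩
    · exact Or.inl rfl
    right
    rw [econj]
    constructor
    · have := hc a (-a) α (y - x) ha
      rwa [hconj] at this
    · intro h3
      rw [← hconj a] at h3
      exact hb (hconjcancel a (y - x) α h3)
  exact ⟨⟨poa, compata,
      fun x y => (predlea x y).trans (succlea x y).symm,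
      fun x y => by rw [predlea x y, predlea y x]; exact htot x y,
      fun x y h1 h2 => hanti x y ((predlea x y).1 h1) ((predlea y x).1 h2)⟩,
    ⟨pob, compatb,
      fun x y => (predleb x y).trans (succleb x y).symm,
      fun x y => by rw [predleb x y, predleb y x]; exact htot x y,
      fun x y h1 h2 => hanti x y ((predleb x y).1 h1) ((predleb y x).1 h2)⟩⟩


end ThrPaper
end

section
/- For a poset P the following are equivalent: (i) the order of P is a semiorder; (ii) P embeds into an abelian threshold group whose threshold is attained; (iii) P embeds into a threshold group. -/
namespace ThrPaper

universe u

variable {X : Type*}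

/-- An ordered group whose order is a threshold order. -/
def IsThresholdGroup (G : Type*) [AddGroup G] (le : G → G → Prop) : Prop :=
  IsPartialOrderRel le ∧ IsCompat le ∧ IsThresholdOrder le

/-- The threshold is attained: the set of strictly positive elements has a least
element with respect to `≤_pred`. -/
def HasAttainedThreshold (G : Type*) [AddGroup G] (le : G → G → Prop) : Prop :=
  ∃ m : G, Lt le 0 m ∧ ∀ x : G, Lt le 0 x → PredLe le m x

/-! ### Lexicographic positivity cone on finitely supported functions -/

section Cone
variable {ι : Type u} [LinearOrder ι]

def FPos (h : ι →₀ ℚ) : Prop := ∃ i, 0 < h i ∧ ∀ j, j < i → h j = 0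

lemma FPos_zero : ¬ FPos (0 : ι →₀ ℚ) := by
  rintro ⟨i, hi, -⟩
  simp at hi

lemma FPos_add {g h : ι →₀ ℚ} (hg : FPos g) (hh : FPos h) : FPos (g + h) := by
  obtain ⟨i, hi, hlow⟩ := hg
  obtain ⟨i', hi', hlow'⟩ := hh
  rcases lt_trichotomy i i' with hc | rfl | hc
  · refine ⟨i, ?_, fun j hj => ?_⟩
    · simpa [Finsupp.add_apply, hlow' i hc] using hi
    · simp [Finsupp.add_apply, hlow j hj, hlow' j (hj.trans hc)]
  · refine ⟨i, ?_, fun j hj => ?_⟩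
    · simp only [Finsupp.add_apply]; linarith
    · simp [Finsupp.add_apply, hlow j hj, hlow' j hj]
  · refine ⟨i', ?_, fun j hj => ?_⟩
    · simpa [Finsupp.add_apply, hlow i' hc] using hi'
    · simp [Finsupp.add_apply, hlow j (hj.trans hc), hlow' j hj]

lemma FPos_tri (h : ι →₀ ℚ) : h = 0 ∨ FPos h ∨ FPos (-h) := by
  by_cases h0 : h = 0
  · exact Or.inl h0
  · right
    have hne : h.support.Nonempty := Finsupp.support_nonempty_iff.2 h0
    have hmem : h.support.min' hne ∈ h.support := h.support.min'_mem hne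
    have hlow : ∀ j, j < h.support.min' hne → h j = 0 := by
      intro j hj
      by_contra hj0
      exact absurd (h.support.min'_le j (Finsupp.mem_support_iff.2 hj0)) (not_le.2 hj)
    have hv : h (h.support.min' hne) ≠ 0 := Finsupp.mem_support_iff.1 hmem
    rcases hv.lt_or_gt with hneg | hpos
    · exact Or.inr ⟨h.support.min' hne, by simpa using hneg, fun j hj => by simp [hlow j hj]⟩
    · exact Or.inl ⟨h.support.min' hne, hpos, hlow⟩

lemma FPos_asym {h : ι →₀ ℚ} (h1 : FPos h) (h2 : FPos (-h)) : False := by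
  obtain ⟨i, hi, hlow⟩ := h1
  obtain ⟨i', hi', hlow'⟩ := h2
  rcases lt_trichotomy i i' with hc | rfl | hc
  · have := hlow' i hc
    simp only [Finsupp.neg_apply, neg_eq_zero] at this
    linarith
  · simp only [Finsupp.neg_apply] at hi'
    linarith
  · have := hlow i' hc
    simp only [Finsupp.neg_apply] at hi'
    rw [this] at hi'
    linarith

lemma FPos_single_sub {a b : ι} (hne : a ≠ b) :
    FPos (Finsupp.single a (1 : ℚ) - Finsupp.single b 1) ↔ a < b := by
  have hval : ∀ j, ((Finsupp.single a (1 : ℚ) - Finsupp.single b 1 : ι →₀ ℚ)) j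
      = (if a = j then (1 : ℚ) else 0) - (if b = j then (1 : ℚ) else 0) := by
    intro j
    rw [Finsupp.sub_apply, Finsupp.single_apply, Finsupp.single_apply]
  constructor
  · rintro ⟨i, hi, hlow⟩
    rw [hval] at hi
    have hia : a = i := by
      by_contra hia
      rw [if_neg hia] at hi
      by_cases hib : b = i
      · rw [if_pos hib] at hi; norm_num at hi
      · rw [if_neg hib] at hi; norm_num at hi
    subst hia
    rcases lt_trichotomy a b with h | h | h
    · exact h
    · exact absurd h hne
    · have hb := hlow b h
      rw [hval, if_neg (fun hh => hne hh), if_pos rfl] at hb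
      norm_num at hb
  · intro hab
    refine ⟨a, ?_, fun j hj => ?_⟩
    · rw [hval, if_pos rfl, if_neg (fun hh : b = a => hne hh.symm)]
      norm_num
    · rw [hval, if_neg (fun hh => absurd (hh ▸ hj) (lt_irrefl _)),
        if_neg (fun hh => absurd (hh ▸ (hj.trans hab)) (lt_irrefl _))]
      norm_num

lemma single_sub_ne_zero {a b : ι} (hne : a ≠ b) :
    Finsupp.single a (1 : ℚ) - Finsupp.single b 1 ≠ 0 := by
  intro h
  have h4 := DFunLike.congr_fun h a
  rw [Finsupp.sub_apply, Finsupp.single_apply, Finsupp.single_apply,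
    if_pos rfl, if_neg (fun hh : b = a => hne hh.symm)] at h4
  norm_num at h4

end Cone

/-! ### Abstract cone gives a threshold group -/

lemma cone_thresholdGroup {G : Type u} [AddCommGroup G] (P : G → Prop) (m : G)
    (Padd : ∀ {g h : G}, P g → P h → P (g + h))
    (Ptri : ∀ g : G, g = 0 ∨ P g ∨ P (-g))
    (Pasym : ∀ g : G, P g → P (-g) → False) (hm : P m) :
    IsThresholdGroup G (fun g h => g = h ∨ h - g = m ∨ P (h - g - m)) ∧
      HasAttainedThreshold G (fun g h => g = h ∨ h - g = m ∨ P (h - g - m)) := by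
  set le' : G → G → Prop := fun g h => g = h ∨ h - g = m ∨ P (h - g - m) with hle'
  have P2m : P (m + m) := Padd hm hm
  have Qasym : ∀ t : G, (t = m ∨ P (t - m)) → (-t = m ∨ P (-t - m)) → False := by
    rintro t (h1 | h1) (h2 | h2)
    · rw [h1] at h2
      have h0 : m + m = 0 := neg_eq_iff_add_eq_zero.mp h2
      have hneg : -(m + m) = m + m := by rw [h0, neg_zero]
      exact Pasym _ P2m (by rw [hneg]; exact P2m)
    · rw [h1, show -m - m = -(m + m) by abel] at h2
      exact Pasym _ P2m h2
    · have ht : t = -m := by rw [← h2, neg_neg]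
      rw [ht, show -m - m = -(m + m) by abel] at h1
      exact Pasym _ P2m h1
    · have := Padd h1 h2
      rw [show t - m + (-t - m) = -(m + m) by abel] at this
      exact Pasym _ P2m this
  have Qadd : ∀ t t' : G, (t = m ∨ P (t - m)) → (t' = m ∨ P (t' - m)) →
      (t + t' = m ∨ P (t + t' - m)) := by
    rintro t t' (h1 | h1) (h2 | h2)
    · right; rw [h1, h2, show m + m - m = m by abel]; exact hm
    · right; rw [h1, show m + t' - m = t' - m + m by abel]; exact Padd h2 hm
    · right; rw [h2, show t + m - m = t - m + m by abel]; exact Padd h1 hm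
    · right; rw [show t + t' - m = t - m + (t' - m) + m by abel]
      exact Padd (Padd h1 h2) hm
  have hrefl : ∀ g, le' g g := fun g => Or.inl rfl
  have htrans : ∀ g h k, le' g h → le' h k → le' g k := by
    rintro g h k (rfl | hgh) hhk
    · exact hhk
    · rcases hhk with rfl | hhk
      · exact Or.inr hgh
      · have := Qadd _ _ hgh hhk
        rw [show h - g + (k - h) = k - g by abel] at this
        exact Or.inr this
  have hantisymm : ∀ g h, le' g h → le' h g → g = h := by
    rintro g h (rfl | hq1) hgh2
    · rfl
    · rcases hgh2 with rfl | hq2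
      · rfl
      · refine absurd hq2 (fun hq2 => Qasym (h - g) hq1 ?_)
        rw [show -(h - g) = g - h by abel]
        exact hq2
  have hLtIff : ∀ g h, Lt le' g h ↔ (h - g = m ∨ P (h - g - m)) := by
    intro g h
    constructor
    · rintro ⟨h1, h2⟩
      rcases h1 with rfl | hq
      · exact absurd (Or.inl rfl) h2
      · exact hq
    · intro hq
      refine ⟨Or.inr hq, ?_⟩
      rintro (rfl | hq2)
      · rw [sub_self] at hq
        refine Qasym 0 hq ?_
        rw [neg_zero]
        exact hq
      · refine Qasym (h - g) hq ?_
        rw [show -(h - g) = g - h by abel]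
        exact hq2
  have hPredIff : ∀ a b, PredLe le' a b ↔ (a = b ∨ P (b - a)) := by
    intro a b
    constructor
    · intro hp
      have h1 : Lt le' (a - m) a := (hLtIff _ _).2 (Or.inl (by abel))
      have h2 := (hLtIff _ _).1 (hp _ h1)
      rcases h2 with h | h
      · left
        have h4 : b - a = 0 := by
          have h5 : b - (a - m) - m = b - a := by abel
          rw [← h5, h, sub_self]
        exact (sub_eq_zero.mp h4).symm
      · right
        rw [show b - (a - m) - m = b - a by abel] at h
        exact h
    · rintro (rfl | hP) z hz
      · exact hz
      · rw [hLtIff] at hz ⊢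
        rcases hz with h | h
        · right
          rw [show b - z - m = b - a + (a - z) - m by abel, h]
          rw [show b - a + m - m = b - a by abel]
          exact hP
        · right
          rw [show b - z - m = b - a + (a - z - m) by abel]
          exact Padd hP h
  have hSuccIff : ∀ a b, SuccLe le' a b ↔ (a = b ∨ P (b - a)) := by
    intro a b
    constructor
    · intro hp
      have h1 : Lt le' b (b + m) := (hLtIff _ _).2 (Or.inl (by abel))
      have h2 := (hLtIff _ _).1 (hp _ h1)
      rcases h2 with h | h
      · left
        have h4 : b - a = 0 := by
          have h5 : b + m - a - m = b - a := by abel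
          rw [← h5, h, sub_self]
        exact (sub_eq_zero.mp h4).symm
      · right
        rw [show b + m - a - m = b - a by abel] at h
        exact h
    · rintro (rfl | hP) z hz
      · exact hz
      · rw [hLtIff] at hz ⊢
        rcases hz with h | h
        · right
          rw [show z - a - m = b - a + (z - b) - m by abel, h]
          rw [show b - a + m - m = b - a by abel]
          exact hP
        · right
          rw [show z - a - m = b - a + (z - b - m) by abel]
          exact Padd hP h
  constructor
  · refine ⟨⟨hrefl, htrans, hantisymm⟩, ?_, ?_, ?_, ?_⟩
    · intro a b x y hxy
      rcases hxy with rfl | hq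
      · exact Or.inl rfl
      · right
        have hrw : a + y + b - (a + x + b) = y - x := by abel
        rw [hrw]
        exact hq
    · intro x y
      rw [hPredIff, hSuccIff]
    · intro x y
      rcases Ptri (y - x) with h | h | h
      · exact Or.inl ((hPredIff x y).2 (Or.inl (sub_eq_zero.mp h).symm))
      · exact Or.inl ((hPredIff x y).2 (Or.inr h))
      · right
        refine (hPredIff y x).2 (Or.inr ?_)
        rw [neg_sub] at h
        exact h
    · intro x y h1 h2
      rcases (hPredIff x y).1 h1 with rfl | h1'
      · rfl
      · rcases (hPredIff y x).1 h2 with h | h2'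
        · exact h.symm
        · exact absurd h2' (fun h2' => Pasym (y - x) h1' (by rw [neg_sub]; exact h2'))
  · refine ⟨m, ?_, ?_⟩
    · exact (hLtIff _ _).2 (Or.inl (by rw [sub_zero]))
    · intro x hx
      have := (hLtIff _ _).1 hx
      rw [sub_zero] at this
      refine (hPredIff m x).2 ?_
      rcases this with rfl | h
      · exact Or.inl rfl
      · exact Or.inr h


/-! ### Semiorder combinatorics -/

section Semi
variable {X : Type u} {le : X → X → Prop}

lemma lt_trans' (hpo : IsPartialOrderRel le) {a b c : X} (h1 : Lt le a b) (h2 : Lt le b c) :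
    Lt le a c :=
  ⟨hpo.2.1 _ _ _ h1.1 h2.1, fun hca => h1.2 (hpo.2.1 _ _ _ h2.1 hca)⟩

lemma lt_irrefl' {a : X} (h : Lt le a a) : False := h.2 h.1

lemma incomp_symm {a b : X} (h : Incomp le a b) : Incomp le b a := ⟨h.2, h.1⟩

lemma incomp_of (hpo : IsPartialOrderRel le) {a b : X} (h1 : ¬ Lt le a b) (h2 : ¬ Lt le b a)
    (h3 : a ≠ b) : Incomp le a b := by
  constructor
  · intro hab
    exact h1 ⟨hab, fun hba => h3 (hpo.2.2 _ _ hab hba)⟩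
  · intro hba
    exact h2 ⟨hba, fun hab => h3 (hpo.2.2 _ _ hab hba)⟩

lemma thr_tricho (hpo : IsPartialOrderRel le) (a b : X) :
    a = b ∨ Lt le a b ∨ Lt le b a ∨ Incomp le a b := by
  by_cases h1 : le a b <;> by_cases h2 : le b a
  · exact Or.inl (hpo.2.2 _ _ h1 h2)
  · exact Or.inr (Or.inl ⟨h1, h2⟩)
  · exact Or.inr (Or.inr (Or.inl ⟨h2, h1⟩))
  · exact Or.inr (Or.inr (Or.inr ⟨h1, h2⟩))

lemma two_two (hpo : IsPartialOrderRel le) (h22 : ¬ Embeds2p2 le) {a b c d : X}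
    (h1 : Lt le a b) (h2 : Lt le c d) : Lt le a d ∨ Lt le c b := by
  by_contra hcon
  push_neg at hcon
  obtain ⟨had, hcb⟩ := hcon
  apply h22
  refine ⟨a, b, c, d, h1, h2, ?_, ?_, ?_, ?_⟩
  · refine incomp_of hpo (fun h => had (lt_trans' hpo h h2)) (fun h => hcb (lt_trans' hpo h h1)) ?_
    rintro rfl
    exact had h2
  · refine incomp_of hpo had (fun h => hcb (lt_trans' hpo (lt_trans' hpo h2 h) h1)) ?_
    rintro rfl
    exact hcb (lt_trans' hpo h2 h1)
  · refine incomp_of hpo (fun h => had (lt_trans' hpo (lt_trans' hpo h1 h) h2)) hcb ?_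
    rintro rfl
    exact had (lt_trans' hpo h1 h2)
  · refine incomp_of hpo (fun h => had (lt_trans' hpo h1 h)) (fun h => hcb (lt_trans' hpo h2 h)) ?_
    rintro rfl
    exact had h1

lemma stair (hpo : IsPartialOrderRel le) (h31 : ¬ Embeds3p1 le) {a b c : X}
    (h1 : Lt le a b) (h2 : Lt le b c) (d : X) : Lt le a d ∨ Lt le d c := by
  by_contra hcon
  push_neg at hcon
  obtain ⟨had, hdc⟩ := hcon
  apply h31
  refine ⟨a, b, c, d, h1, h2, ?_, ?_, ?_⟩
  · refine incomp_of hpo (fun h => hdc (lt_trans' hpo (lt_trans' hpo h h1) h2)) had ?_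
    rintro rfl
    exact hdc (lt_trans' hpo h1 h2)
  · refine incomp_of hpo (fun h => hdc (lt_trans' hpo h h2)) (fun h => had (lt_trans' hpo h1 h)) ?_
    rintro rfl
    exact hdc h2
  · refine incomp_of hpo hdc (fun h => had (lt_trans' hpo h1 (lt_trans' hpo h2 h))) ?_
    rintro rfl
    exact had (lt_trans' hpo h1 h2)

def Trl (le : X → X → Prop) (x y : X) : Prop := PredLe le x y ∧ SuccLe le x y

lemma trl_refl (x : X) : Trl le x x := ⟨fun _ h => h, fun _ h => h⟩

lemma trl_trans {x y z : X} (h1 : Trl le x y) (h2 : Trl le y z) : Trl le x z :=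
  ⟨fun w hw => h2.1 w (h1.1 w hw), fun w hw => h1.2 w (h2.2 w hw)⟩

lemma trl_total (hpo : IsPartialOrderRel le) (h22 : ¬ Embeds2p2 le) (h31 : ¬ Embeds3p1 le)
    (x y : X) : Trl le x y ∨ Trl le y x := by
  by_cases hP : PredLe le x y
  · by_cases hS : SuccLe le x y
    · exact Or.inl ⟨hP, hS⟩
    · unfold SuccLe at hS
      push_neg at hS
      obtain ⟨z, hyz, hxz⟩ := hS
      right
      constructor
      · intro c hcy
        rcases stair hpo h31 hcy hyz x with h | h
        · exact h
        · exact absurd h hxz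
      · intro z' hxz'
        rcases two_two hpo h22 hyz hxz' with h | h
        · exact h
        · exact absurd h hxz
  · unfold PredLe at hP
    push_neg at hP
    obtain ⟨a, hax, hay⟩ := hP
    right
    constructor
    · intro c hcy
      rcases two_two hpo h22 hcy hax with h | h
      · exact h
      · exact absurd h hay
    · intro z hxz
      rcases stair hpo h31 hax hxz y with h | h
      · exact absurd h hay
      · exact h

lemma exists_trl_max (hpo : IsPartialOrderRel le) (h22 : ¬ Embeds2p2 le) (h31 : ¬ Embeds3p1 le)
    (S : Finset X) (hS : S.Nonempty) : ∃ x₀ ∈ S, ∀ y ∈ S, Trl le y x₀ := by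
  classical
  induction S using Finset.induction_on with
  | empty => exact absurd hS (by simp)
  | insert a s ha ih =>
    by_cases hs : s.Nonempty
    · obtain ⟨x₀, hx₀S, hmax⟩ := ih hs
      rcases trl_total hpo h22 h31 x₀ a with h | h
      · refine ⟨a, Finset.mem_insert_self _ _, ?_⟩
        intro y hy
        rcases Finset.mem_insert.1 hy with rfl | hy
        · exact trl_refl y
        · exact trl_trans (hmax y hy) h
      · refine ⟨x₀, Finset.mem_insert_of_mem hx₀S, ?_⟩
        intro y hy
        rcases Finset.mem_insert.1 hy with rfl | hy
        · exact h
        · exact hmax y hy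
    · have hse : s = ∅ := Finset.not_nonempty_iff_eq_empty.1 hs
      subst hse
      refine ⟨a, Finset.mem_insert_self _ _, ?_⟩
      intro y hy
      rcases Finset.mem_insert.1 hy with rfl | hy
      · exact trl_refl y
      · simp at hy

theorem scott_suppes (hpo : IsPartialOrderRel le) (h22 : ¬ Embeds2p2 le) (h31 : ¬ Embeds3p1 le)
    (S : Finset X) :
    ∃ q : X → ℚ,
      (∀ a ∈ S, ∀ b ∈ S, Lt le a b → 1 < q b - q a) ∧
      (∀ a ∈ S, ∀ b ∈ S, Incomp le a b → |q b - q a| < 1) ∧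
      (∀ a ∈ S, ∀ b ∈ S, (Trl le a b ↔ q a ≤ q b)) := by
  classical
  induction S using Finset.strongInduction with
  | _ S ih =>
  rcases S.eq_empty_or_nonempty with rfl | hS
  · exact ⟨fun _ => 0, by simp, by simp, by simp⟩
  obtain ⟨x₀, hx₀S, hmax⟩ := exists_trl_max hpo h22 h31 S hS
  obtain ⟨q', h1, h2, h3⟩ := ih (S.erase x₀) (Finset.erase_ssubset hx₀S)
  have hS'sub : ∀ s ∈ S.erase x₀, s ∈ S := fun s hs => Finset.mem_of_mem_erase hs
  have hS'ne : ∀ s ∈ S.erase x₀, s ≠ x₀ := fun s hs => Finset.ne_of_mem_erase hs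
  have hmem' : ∀ s ∈ S, s ≠ x₀ → s ∈ S.erase x₀ := fun s hs hne => Finset.mem_erase.2 ⟨hne, hs⟩
  have hnltx : ∀ s ∈ S, ¬ Lt le x₀ s := by
    intro s hs hlt
    exact lt_irrefl' ((hmax s hs).2 s hlt)
  by_cases hr : ∃ r ∈ S.erase x₀, Trl le x₀ r
  · -- an element trace-equivalent to x₀ already exists
    obtain ⟨r₀, hr₀S', hxr⟩ := hr
    have hrx : Trl le r₀ x₀ := hmax r₀ (hS'sub _ hr₀S')
    have E1 : ∀ z, Lt le z x₀ ↔ Lt le z r₀ := fun z => ⟨fun h => hxr.1 z h, fun h => hrx.1 z h⟩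
    have E2 : ∀ z, Lt le x₀ z ↔ Lt le r₀ z := fun z => ⟨fun h => hrx.2 z h, fun h => hxr.2 z h⟩
    have E3 : ∀ z, Trl le z x₀ ↔ Trl le z r₀ :=
      fun z => ⟨fun h => trl_trans h hxr, fun h => trl_trans h hrx⟩
    have E4 : ∀ z, Trl le x₀ z ↔ Trl le r₀ z :=
      fun z => ⟨fun h => trl_trans hrx h, fun h => trl_trans hxr h⟩
    set q : X → ℚ := fun z => if z = x₀ then q' r₀ else q' z with hqdef
    have hqx : q x₀ = q' r₀ := by rw [hqdef]; simp
    have hqo : ∀ s, s ≠ x₀ → q s = q' s := by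
      intro s hs
      rw [hqdef]
      simp [hs]
    refine ⟨q, ?_, ?_, ?_⟩
    · intro a ha b hb hab
      by_cases ha' : a = x₀
      · rw [ha'] at hab
        exact absurd hab (hnltx b hb)
      · have haS' := hmem' a ha ha'
        by_cases hb' : b = x₀
        · rw [hb'] at hab
          rw [hb', hqx, hqo a ha']
          exact h1 a haS' r₀ hr₀S' ((E1 a).1 hab)
        · have hbS' := hmem' b hb hb'
          rw [hqo a ha', hqo b hb']
          exact h1 a haS' b hbS' hab
    · intro a ha b hb hab
      by_cases ha' : a = x₀
      · by_cases hb' : b = x₀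
        · rw [ha', hb'] at hab
          exact absurd (hpo.1 x₀) hab.1
        · have hbS' := hmem' b hb hb'
          rw [ha'] at hab
          rw [ha', hqx, hqo b hb']
          by_cases hbr : b = r₀
          · rw [hbr]
            simp
          · have hinc : Incomp le b r₀ :=
              incomp_of hpo (fun h => hab.2 ((E1 b).2 h).1) (fun h => hab.1 ((E2 b).2 h).1) hbr
            exact h2 r₀ hr₀S' b hbS' (incomp_symm hinc)
      · have haS' := hmem' a ha ha'
        by_cases hb' : b = x₀
        · rw [hb'] at hab
          rw [hb', hqx, hqo a ha']
          by_cases har : a = r₀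
          · rw [har]
            simp
          · have hinc : Incomp le a r₀ :=
              incomp_of hpo (fun h => hab.1 ((E1 a).2 h).1) (fun h => hab.2 ((E2 a).2 h).1) har
            exact h2 a haS' r₀ hr₀S' hinc
        · have hbS' := hmem' b hb hb'
          rw [hqo a ha', hqo b hb']
          exact h2 a haS' b hbS' hab
    · intro a ha b hb
      by_cases ha' : a = x₀
      · by_cases hb' : b = x₀
        · rw [ha', hb']
          exact iff_of_true (trl_refl _) le_rfl
        · have hbS' := hmem' b hb hb'
          rw [ha', hqx, hqo b hb']
          exact (E4 b).trans (h3 r₀ hr₀S' b hbS')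
      · have haS' := hmem' a ha ha'
        by_cases hb' : b = x₀
        · rw [hb', hqx, hqo a ha']
          exact (E3 a).trans (h3 a haS' r₀ hr₀S')
        · have hbS' := hmem' b hb hb'
          rw [hqo a ha', hqo b hb']
          exact h3 a haS' b hbS'
  · -- x₀ is alone in its trace class
    have hnotrl : ∀ s ∈ S.erase x₀, ¬ Trl le x₀ s := fun s hs h => hr ⟨s, hs, h⟩
    have key1 : ∀ s ∈ S.erase x₀, ∀ t ∈ S.erase x₀, Lt le s x₀ → Incomp le t x₀ →
        q' s < q' t := by
      intro s hs t ht hsx htx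
      have hnts : ¬ Trl le t s := fun h => htx.1 (h.2 x₀ hsx).1
      have := fun hle => hnts ((h3 t ht s hs).2 hle)
      exact not_le.1 this
    have key2 : ∀ s ∈ S.erase x₀, ∀ t ∈ S.erase x₀, Incomp le t x₀ → q' s < q' t + 1 := by
      intro s hs t ht htx
      rcases trl_total hpo h22 h31 s t with h | h
      · have := (h3 s hs t ht).1 h
        linarith
      · rcases thr_tricho hpo s t with rfl | hst | hts | hinc
        · linarith
        · have := h1 s hs t ht hst
          linarith
        · exact absurd ((hmax s (hS'sub s hs)).1 t hts).1 htx.1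
        · have := h2 s hs t ht hinc
          rw [abs_lt] at this
          linarith
    rcases (S.erase x₀).eq_empty_or_nonempty with hS'e | hS'ne2
    · have hSx : ∀ a ∈ S, a = x₀ := by
        intro a ha
        by_contra hne
        have := hmem' a ha hne
        rw [hS'e] at this
        simp at this
      refine ⟨fun _ => 0, ?_, ?_, ?_⟩
      · intro a ha b hb h
        rw [hSx a ha, hSx b hb] at h
        exact absurd h (fun h => lt_irrefl' h)
      · intro a ha b hb h
        rw [hSx a ha, hSx b hb] at h
        exact absurd (hpo.1 x₀) h.1
      · intro a ha b hb
        rw [hSx a ha, hSx b hb]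
        exact iff_of_true (trl_refl _) le_rfl
    · set flow : X → ℚ := fun s => if Lt le s x₀ then q' s + 1 else q' s with hflow
      set lows := (S.erase x₀).image flow with hlows
      have hlowsne : lows.Nonempty := hS'ne2.image _
      set L := lows.max' hlowsne with hL
      set ups := ((S.erase x₀).filter (fun t => Incomp le t x₀)).image (fun t => q' t + 1)
        with hups
      have hflowval : ∀ s, flow s = if Lt le s x₀ then q' s + 1 else q' s := fun s => rfl
      have hLub : ∀ u ∈ ups, L < u := by
        intro u hu
        rw [hups] at hu
        obtain ⟨t, htmem, rfl⟩ := Finset.mem_image.1 hu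
        obtain ⟨htS', htx⟩ := Finset.mem_filter.1 htmem
        rw [hL]
        rw [Finset.max'_lt_iff]
        intro l hl
        rw [hlows] at hl
        obtain ⟨s, hsS', rfl⟩ := Finset.mem_image.1 hl
        rw [hflowval]
        by_cases hsx : Lt le s x₀
        · rw [if_pos hsx]
          have := key1 s hsS' t htS' hsx htx
          linarith
        · rw [if_neg hsx]
          exact key2 s hsS' t htS' htx
      set v : ℚ := if hU : ups.Nonempty then (L + ups.min' hU) / 2 else L + 1 with hv
      have hvgtL : L < v := by
        rw [hv]
        split_ifs with hU
        · have := hLub _ (ups.min'_mem hU)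
          linarith
        · linarith
      have hvltU : ∀ u ∈ ups, v < u := by
        intro u hu
        rw [hv]
        split_ifs with hU
        · have h1' := ups.min'_le u hu
          have := hLub _ (ups.min'_mem hU)
          linarith
        · exact absurd ⟨u, hu⟩ hU
      have hflowle : ∀ s ∈ S.erase x₀, flow s ≤ L :=
        fun s hs => Finset.le_max' _ _ (Finset.mem_image_of_mem _ hs)
      have hvq : ∀ s ∈ S.erase x₀, q' s < v := by
        intro s hs
        have := hflowle s hs
        rw [hflowval] at this
        by_cases hsx : Lt le s x₀
        · rw [if_pos hsx] at this
          linarith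
        · rw [if_neg hsx] at this
          linarith
      have hvlt : ∀ s ∈ S.erase x₀, Lt le s x₀ → q' s + 1 < v := by
        intro s hs hsx
        have := hflowle s hs
        rw [hflowval, if_pos hsx] at this
        linarith
      have hvinc : ∀ s ∈ S.erase x₀, Incomp le s x₀ → v < q' s + 1 := by
        intro s hs hsx
        exact hvltU _ (by
          rw [hups]
          exact Finset.mem_image_of_mem _ (Finset.mem_filter.2 ⟨hs, hsx⟩))
      set q : X → ℚ := fun z => if z = x₀ then v else q' z with hqdef
      have hqx : q x₀ = v := by rw [hqdef]; simp
      have hqo : ∀ s, s ≠ x₀ → q s = q' s := by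
        intro s hs
        rw [hqdef]
        simp [hs]
      refine ⟨q, ?_, ?_, ?_⟩
      · intro a ha b hb hab
        by_cases ha' : a = x₀
        · rw [ha'] at hab
          exact absurd hab (hnltx b hb)
        · have haS' := hmem' a ha ha'
          by_cases hb' : b = x₀
          · rw [hb'] at hab
            rw [hb', hqx, hqo a ha']
            have := hvlt a haS' hab
            linarith
          · have hbS' := hmem' b hb hb'
            rw [hqo a ha', hqo b hb']
            exact h1 a haS' b hbS' hab
      · intro a ha b hb hab
        by_cases ha' : a = x₀
        · by_cases hb' : b = x₀
          · rw [ha', hb'] at hab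
            exact absurd (hpo.1 x₀) hab.1
          · have hbS' := hmem' b hb hb'
            rw [ha'] at hab
            rw [ha', hqx, hqo b hb']
            have hv1 := hvinc b hbS' (incomp_symm hab)
            have hv2 := hvq b hbS'
            rw [abs_lt]
            constructor <;> linarith
        · have haS' := hmem' a ha ha'
          by_cases hb' : b = x₀
          · rw [hb'] at hab
            rw [hb', hqx, hqo a ha']
            have hv1 := hvinc a haS' hab
            have hv2 := hvq a haS'
            rw [abs_lt]
            constructor <;> linarith
          · have hbS' := hmem' b hb hb'
            rw [hqo a ha', hqo b hb']
            exact h2 a haS' b hbS' hab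
      · intro a ha b hb
        by_cases ha' : a = x₀
        · by_cases hb' : b = x₀
          · rw [ha', hb']
            exact iff_of_true (trl_refl _) le_rfl
          · have hbS' := hmem' b hb hb'
            rw [ha', hqx, hqo b hb']
            exact iff_of_false (hnotrl b hbS') (not_le.2 (hvq b hbS'))
        · have haS' := hmem' a ha ha'
          by_cases hb' : b = x₀
          · rw [hb', hqx, hqo a ha']
            exact iff_of_true (hmax a ha) (le_of_lt (hvq a haS'))
          · have hbS' := hmem' b hb hb'
            rw [hqo a ha', hqo b hb']
            exact h3 a haS' b hbS'

/-! ### Paths and heights -/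

inductive PathIn (le : X → X → Prop) (S : Finset X) : X → X → ℤ → ℕ → Prop where
  | nil (x : X) (hx : x ∈ S) : PathIn le S x x 0 0
  | consL {a b c : X} {w : ℤ} {k : ℕ} (hab : Lt le a b) (ha : a ∈ S)
      (p : PathIn le S b c w k) : PathIn le S a c (w + 1) (k + 1)
  | consI {a b c : X} {w : ℤ} {k : ℕ} (hab : Incomp le a b) (ha : a ∈ S)
      (p : PathIn le S b c w k) : PathIn le S a c (w - 1) (k + 1)

lemma PathIn.cast {S : Finset X} {a b : X} {w w' : ℤ} {k k' : ℕ}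
    (h : PathIn le S a b w k) (hw : w = w') (hk : k = k') : PathIn le S a b w' k' :=
  hw ▸ hk ▸ h

lemma PathIn.mem_left {S : Finset X} {a b : X} {w : ℤ} {k : ℕ} (p : PathIn le S a b w k) :
    a ∈ S := by
  cases p with
  | nil x hx => exact hx
  | consL hab ha p => exact ha
  | consI hab ha p => exact ha

lemma PathIn.mem_right {S : Finset X} {a b : X} {w : ℤ} {k : ℕ} (p : PathIn le S a b w k) :
    b ∈ S := by
  induction p with
  | nil x hx => exact hx
  | consL hab ha p ih => exact ih
  | consI hab ha p ih => exact ih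

lemma PathIn.weaken {S T : Finset X} {a b : X} {w : ℤ} {k : ℕ} (hST : S ⊆ T)
    (p : PathIn le S a b w k) : PathIn le T a b w k := by
  induction p with
  | nil x hx => exact .nil x (hST hx)
  | consL hab ha p ih => exact .consL hab (hST ha) ih
  | consI hab ha p ih => exact .consI hab (hST ha) ih

lemma PathIn.concat [DecidableEq X] {S T : Finset X} {a b c : X} {w w' : ℤ} {k k' : ℕ}
    (p : PathIn le S a b w k) (p' : PathIn le T b c w' k') :
    PathIn le (S ∪ T) a c (w + w') (k + k') := by
  induction p with
  | nil x hx =>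
      refine (p'.weaken Finset.subset_union_right).cast ?_ ?_
      · ring
      · omega
  | consL hab ha p ih =>
      refine (PathIn.consL hab (Finset.mem_union_left _ ha) (ih p')).cast ?_ ?_
      · ring
      · omega
  | consI hab ha p ih =>
      refine (PathIn.consI hab (Finset.mem_union_left _ ha) (ih p')).cast ?_ ?_
      · ring
      · omega

lemma PathIn.eq_of_len_zero {S : Finset X} {a b : X} {w : ℤ} (p : PathIn le S a b w 0) :
    a = b ∧ w = 0 := by
  cases p
  exact ⟨rfl, rfl⟩

lemma PathIn.sum {S : Finset X} {a b : X} {w : ℤ} {k : ℕ} {q : X → ℚ}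
    (p : PathIn le S a b w k)
    (hq1 : ∀ x ∈ S, ∀ y ∈ S, Lt le x y → 1 < q y - q x)
    (hq2 : ∀ x ∈ S, ∀ y ∈ S, Incomp le x y → |q y - q x| < 1) :
    (k = 0 ∧ a = b ∧ w = 0) ∨ (w : ℚ) < q b - q a := by
  induction p with
  | nil x hx => exact Or.inl ⟨rfl, rfl, rfl⟩
  | consL hab ha p ih =>
      right
      have hb := p.mem_left
      have hstep := hq1 _ ha _ hb hab
      rcases ih with ⟨-, rfl, rfl⟩ | ih
      · push_cast
        linarith
      · push_cast
        linarith
  | consI hab ha p ih =>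
      right
      have hb := p.mem_left
      have hstep := hq2 _ ha _ hb hab
      rw [abs_lt] at hstep
      rcases ih with ⟨-, rfl, rfl⟩ | ih
      · push_cast
        linarith
      · push_cast
        linarith

lemma loop_bound (hpo : IsPartialOrderRel le) (h22 : ¬ Embeds2p2 le) (h31 : ¬ Embeds3p1 le)
    {S : Finset X} {x : X} {w : ℤ} {k : ℕ} (p : PathIn le S x x w k) (hk : 1 ≤ k) :
    w ≤ -1 := by
  obtain ⟨q, hq1, hq2, -⟩ := scott_suppes hpo h22 h31 S
  rcases p.sum hq1 hq2 with ⟨h0, -, -⟩ | h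
  · omega
  · have h2 : (w : ℚ) < 0 := by simpa using h
    have h3 : w < 0 := by exact_mod_cast h2
    omega

/-! ### Galaxies -/

def gSet (le : X → X → Prop) : Setoid X :=
  ⟨Relation.ReflTransGen (Incomp le),
    ⟨fun _ => Relation.ReflTransGen.refl,
      fun h => (fun a b h => @Std.Symm.symm _ _ (@Relation.ReflTransGen.stdSymm _ _ ⟨fun _ _ hxy => incomp_symm hxy⟩) a b h) _ _ h,
      fun h1 h2 => h1.trans h2⟩⟩

lemma gSet_rel {a b : X} (h : (gSet le).r a b) : Relation.ReflTransGen (Incomp le) a b := h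

lemma path_of_rtg [DecidableEq X] {a b : X} (h : Relation.ReflTransGen (Incomp le) a b) :
    ∃ (k : ℕ) (S : Finset X), PathIn le S a b (-(k : ℤ)) k := by
  induction h with
  | refl => exact ⟨0, {a}, (PathIn.nil a (by simp)).cast (by simp) rfl⟩
  | @tail p c hp hpc ih =>
      obtain ⟨k, S, pth⟩ := ih
      refine ⟨k + 1, S ∪ ({p, c} : Finset X), ?_⟩
      have pstep : PathIn le ({p, c} : Finset X) p c (0 - 1) (0 + 1) :=
        PathIn.consI hpc (by simp) (PathIn.nil c (by simp))
      refine (pth.concat pstep).cast ?_ ?_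
      · push_cast
        ring
      · omega

lemma lt_transfer_right (hpo : IsPartialOrderRel le) {a b b' : X}
    (hgal : ¬ Relation.ReflTransGen (Incomp le) a b) (h : Lt le a b)
    (hb : Relation.ReflTransGen (Incomp le) b b') : Lt le a b' := by
  induction hb with
  | refl => exact h
  | @tail p c hp hpc ih =>
      have hsym : Symmetric (Relation.ReflTransGen (Incomp le)) :=
        (fun a b h => @Std.Symm.symm _ _ (@Relation.ReflTransGen.stdSymm _ _ ⟨fun _ _ hxy => incomp_symm hxy⟩) a b h)
      have hrel : Relation.ReflTransGen (Incomp le) b c := hp.tail hpc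
      have hnac : a ≠ c := by
        rintro rfl
        exact hgal (hsym hrel)
      have hninc : ¬ Incomp le a c :=
        fun hinc => hgal ((Relation.ReflTransGen.single hinc).trans (hsym hrel))
      rcases thr_tricho hpo a c with rfl | hac | hca | hinc
      · exact absurd rfl hnac
      · exact hac
      · exact absurd (lt_trans' hpo hca ih).1 hpc.2
      · exact absurd hinc hninc

lemma lt_transfer_left (hpo : IsPartialOrderRel le) {a b a' : X}
    (hgal : ¬ Relation.ReflTransGen (Incomp le) a b) (h : Lt le a b)
    (ha : Relation.ReflTransGen (Incomp le) a a') : Lt le a' b := by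
  induction ha with
  | refl => exact h
  | @tail p c hp hpc ih =>
      have hsym : Symmetric (Relation.ReflTransGen (Incomp le)) :=
        (fun a b h => @Std.Symm.symm _ _ (@Relation.ReflTransGen.stdSymm _ _ ⟨fun _ _ hxy => incomp_symm hxy⟩) a b h)
      have hrel : Relation.ReflTransGen (Incomp le) a c := hp.tail hpc
      have hncb : c ≠ b := by
        rintro rfl
        exact hgal hrel
      have hninc : ¬ Incomp le c b :=
        fun hinc => hgal (hrel.trans (Relation.ReflTransGen.single hinc))
      rcases thr_tricho hpo c b with heq | hcb | hbc | hinc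
      · exact absurd heq hncb
      · exact hcb
      · exact absurd (lt_trans' hpo ih hbc).1 hpc.1
      · exact absurd hinc hninc

lemma base_rel (x : X) :
    Relation.ReflTransGen (Incomp le) ((Quotient.mk (gSet le) x).out) x :=
  Quotient.exact (Quotient.out_eq (Quotient.mk (gSet le) x))

lemma lt_out_transfer (hpo : IsPartialOrderRel le) {x y : X} (hxy : Lt le x y)
    (hne : ¬ Relation.ReflTransGen (Incomp le) x y) :
    Lt le ((Quotient.mk (gSet le) x).out) ((Quotient.mk (gSet le) y).out) := by
  have hsym : Symmetric (Relation.ReflTransGen (Incomp le)) :=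
    (fun a b h => @Std.Symm.symm _ _ (@Relation.ReflTransGen.stdSymm _ _ ⟨fun _ _ hxy => incomp_symm hxy⟩) a b h)
  have step1 : Lt le x ((Quotient.mk (gSet le) y).out) :=
    lt_transfer_right hpo hne hxy (hsym (base_rel y))
  have hne2 : ¬ Relation.ReflTransGen (Incomp le) x ((Quotient.mk (gSet le) y).out) :=
    fun h => hne (h.trans (base_rel y))
  exact lt_transfer_left hpo hne2 step1 (hsym (base_rel x))

lemma exists_heights (hpo : IsPartialOrderRel le) (h22 : ¬ Embeds2p2 le)
    (h31 : ¬ Embeds3p1 le) :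
    ∃ n : X → ℤ,
      (∀ x y, Lt le x y → (Quotient.mk (gSet le) x = Quotient.mk (gSet le) y) →
        n x + 1 ≤ n y) ∧
      (∀ x y, Incomp le x y → n x - 1 ≤ n y) := by
  classical
  have hsym : Symmetric (Relation.ReflTransGen (Incomp le)) :=
    (fun a b h => @Std.Symm.symm _ _ (@Relation.ReflTransGen.stdSymm _ _ ⟨fun _ _ hxy => incomp_symm hxy⟩) a b h)
  have H : ∀ x : X, ∃ nx : ℤ,
      (∃ k S, PathIn le S ((Quotient.mk (gSet le) x).out) x nx k) ∧
      ∀ w, (∃ k S, PathIn le S ((Quotient.mk (gSet le) x).out) x w k) → w ≤ nx := by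
    intro x
    obtain ⟨k₀, S₀, p₀⟩ := path_of_rtg (base_rel x)
    obtain ⟨k₁, S₁, p₁⟩ := path_of_rtg (hsym (base_rel x))
    apply Int.exists_greatest_of_bdd
    · refine ⟨(k₁ : ℤ), ?_⟩
      rintro w ⟨k, S, p⟩
      have ploop := p.concat p₁
      by_cases hk : k + k₁ = 0
      · have hk0 : k = 0 := by omega
        obtain ⟨-, hw⟩ := (p.cast rfl hk0).eq_of_len_zero
        omega
      · have := loop_bound hpo h22 h31 ploop (by omega)
        omega
    · exact ⟨-(k₀ : ℤ), k₀, S₀, p₀⟩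
  choose n hmem hmax using H
  refine ⟨n, ?_, ?_⟩
  · intro x y hxy hgal
    obtain ⟨k, S, p⟩ := hmem x
    have pstep : PathIn le {x, y} x y (0 + 1) (0 + 1) :=
      PathIn.consL hxy (by simp) (PathIn.nil y (by simp))
    have pcat := (p.concat pstep).cast (show n x + (0 + 1) = n x + 1 by ring) rfl
    rw [hgal] at pcat
    exact hmax y _ ⟨_, _, pcat⟩
  · intro x y hxy
    have hgal : (Quotient.mk (gSet le) x) = Quotient.mk (gSet le) y :=
      Quotient.sound (Relation.ReflTransGen.single hxy)
    obtain ⟨k, S, p⟩ := hmem x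
    have pstep : PathIn le {x, y} x y (0 - 1) (0 + 1) :=
      PathIn.consI hxy (by simp) (PathIn.nil y (by simp))
    have pcat := (p.concat pstep).cast (show n x + (0 - 1) = n x - 1 by ring) rfl
    rw [hgal] at pcat
    exact hmax y _ ⟨_, _, pcat⟩

/-! ### The hard direction -/

theorem hard_direction {X : Type u} {le : X → X → Prop} (hpo : IsPartialOrderRel le)
    (h22 : ¬ Embeds2p2 le) (h31 : ¬ Embeds3p1 le) :
    ∃ (G : Type u) (inst : AddCommGroup G) (le' : G → G → Prop),
      @IsThresholdGroup G inst.toAddGroup le' ∧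
      @HasAttainedThreshold G inst.toAddGroup le' ∧
      ∃ f : X → G, Function.Injective f ∧ ∀ a b : X, le a b ↔ le' (f a) (f b) := by
  classical
  obtain ⟨n, NL1, NL2⟩ := exists_heights hpo h22 h31
  -- the auxiliary strict order used to break ties at distance exactly one
  set tri : X → X → Prop :=
    fun x y => (Lt le x y ∧ n y = n x + 1) ∨ (Incomp le x y ∧ n x = n y + 1) with htri
  have tri_path : ∀ a b, tri a b → PathIn le ({a, b} : Finset X) a b (n b - n a) 1 := by
    rintro a b (⟨h, hn⟩ | ⟨h, hn⟩)
    · exact (PathIn.consL h (by simp) (PathIn.nil b (by simp))).cast (by omega) rfl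
    · exact (PathIn.consI h (by simp) (PathIn.nil b (by simp))).cast (by omega) rfl
  set r : X → X → Prop := Relation.ReflTransGen tri with hrdef
  have rpath : ∀ a b, r a b → a = b ∨ ∃ k S, 1 ≤ k ∧ PathIn le S a b (n b - n a) k := by
    intro a b h
    induction h with
    | refl => exact Or.inl rfl
    | @tail p c hp hpc ih =>
      right
      rcases ih with rfl | ⟨k, S, hk, pth⟩
      · exact ⟨1, _, le_refl _, tri_path _ c hpc⟩
      · refine ⟨k + 1, S ∪ ({p, c} : Finset X), by omega, ?_⟩
        refine (pth.concat (tri_path p c hpc)).cast ?_ ?_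
        · ring
        · rfl
  have rantisymm : ∀ a b, r a b → r b a → a = b := by
    intro a b hab hba
    rcases rpath a b hab with rfl | ⟨k, S, hk, p⟩
    · rfl
    rcases rpath b a hba with heq | ⟨k', S', hk', p'⟩
    · exact heq.symm
    · exfalso
      have hcat := (p.concat p').cast (show n b - n a + (n a - n b) = 0 by ring) rfl
      have := loop_bound hpo h22 h31 hcat (by omega)
      omega
  haveI hrpo : IsPartialOrder X r :=
    { refl := fun a => Relation.ReflTransGen.refl
      trans := fun a b c h1 h2 => h1.trans h2
      antisymm := rantisymm }
  obtain ⟨sle, hslin, hrs⟩ := extend_partialOrder r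
  haveI := hslin
  have str : ∀ {a b c : X}, sle a b → sle b c → sle a c :=
    fun h1 h2 => IsTrans.trans _ _ _ h1 h2
  have san : ∀ {a b : X}, sle a b → sle b a → a = b :=
    fun h1 h2 => Std.Antisymm.antisymm _ _ h1 h2
  have stot : ∀ a b : X, sle a b ∨ sle b a := fun a b => Std.Total.total a b
  set slt : X → X → Prop := fun a b => sle a b ∧ a ≠ b with hsltdef
  haveI hsto : IsStrictTotalOrder X slt :=
    { trichotomous := by
        intro a b h1' h2'
        by_cases hab : a = b
        · exact hab
        · rcases stot a b with h | h
          · exact absurd ⟨h, hab⟩ h1'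
          · exact absurd ⟨h, Ne.symm hab⟩ h2'
      irrefl := fun a h => h.2 rfl
      trans := by
        rintro a b c ⟨h1, hne1⟩ ⟨h2, hne2⟩
        refine ⟨str h1 h2, ?_⟩
        rintro rfl
        exact hne1 (san h1 h2) }
  haveI : DecidableRel slt := Classical.decRel _
  letI LOX : LinearOrder X := linearOrderOfSTO slt
  -- the linear order on galaxies
  set ltG : Quotient (gSet le) → Quotient (gSet le) → Prop :=
    fun γ δ => γ ≠ δ ∧ Lt le γ.out δ.out with hltGdef
  haveI hstoG : IsStrictTotalOrder (Quotient (gSet le)) ltG :=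
    { trichotomous := by
        intro γ δ h1' h2'
        by_cases hγδ : γ = δ
        · exact hγδ
        · have hne' : γ.out ≠ δ.out := by
            intro h
            exact hγδ (by rw [← Quotient.out_eq γ, ← Quotient.out_eq δ, h])
          have hninc : ¬ Incomp le γ.out δ.out := by
            intro h
            refine hγδ ?_
            rw [← Quotient.out_eq γ, ← Quotient.out_eq δ]
            exact Quotient.sound (Relation.ReflTransGen.single h)
          rcases thr_tricho hpo γ.out δ.out with h | h | h | h
          · exact absurd h hne'
          · exact absurd ⟨hγδ, h⟩ h1'
          · exact absurd ⟨Ne.symm hγδ, h⟩ h2'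
          · exact absurd h hninc
      irrefl := fun γ h => h.1 rfl
      trans := by
        rintro γ δ ε ⟨hne1, h1⟩ ⟨hne2, h2⟩
        refine ⟨?_, lt_trans' hpo h1 h2⟩
        rintro rfl
        exact (lt_trans' hpo h1 h2).2 (lt_trans' hpo h1 h2).1 }
  haveI : DecidableRel ltG := Classical.decRel _
  letI LOG : LinearOrder (Quotient (gSet le)) := linearOrderOfSTO ltG
  have galt : ∀ x y : X, Lt le x y → Quotient.mk (gSet le) x ≠ Quotient.mk (gSet le) y →
      ltG (Quotient.mk (gSet le) x) (Quotient.mk (gSet le) y) := by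
    intro x y hxy hne
    refine ⟨hne, ?_⟩
    exact lt_out_transfer hpo hxy (fun h => hne (Quotient.sound h))
  -- the group
  set m : (Quotient (gSet le) →₀ ℚ) × ℚ × (X →₀ ℚ) := (0, 1, 0) with hmdef
  set P : (Quotient (gSet le) →₀ ℚ) × ℚ × (X →₀ ℚ) → Prop :=
    fun g => FPos g.1 ∨ (g.1 = 0 ∧ (0 < g.2.1 ∨ (g.2.1 = 0 ∧ FPos g.2.2))) with hPdef
  have Padd : ∀ {g h}, P g → P h → P (g + h) := by
    rintro g h (hg | ⟨hg0, hg⟩) (hh | ⟨hh0, hh⟩)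
    · exact Or.inl (FPos_add hg hh)
    · left
      have h1 : (g + h).1 = g.1 := by
        show g.1 + h.1 = g.1
        rw [hh0, add_zero]
      rw [h1]
      exact hg
    · left
      have h1 : (g + h).1 = h.1 := by
        show g.1 + h.1 = h.1
        rw [hg0, zero_add]
      rw [h1]
      exact hh
    · right
      refine ⟨by show g.1 + h.1 = 0; rw [hg0, hh0, add_zero], ?_⟩
      rcases hg with hq | ⟨hq0, hgd⟩ <;> rcases hh with hq' | ⟨hq0', hhd⟩
      · left
        show 0 < g.2.1 + h.2.1
        linarith
      · left
        show 0 < g.2.1 + h.2.1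
        rw [hq0']
        linarith
      · left
        show 0 < g.2.1 + h.2.1
        rw [hq0]
        linarith
      · right
        constructor
        · show g.2.1 + h.2.1 = 0
          rw [hq0, hq0', add_zero]
        · exact FPos_add hgd hhd
  have Ptri : ∀ g, g = 0 ∨ P g ∨ P (-g) := by
    intro g
    rcases FPos_tri g.1 with h1 | h1 | h1
    · rcases lt_trichotomy g.2.1 0 with h2 | h2 | h2
      · right; right
        refine Or.inr ⟨by show -g.1 = 0; rw [h1, neg_zero], Or.inl ?_⟩
        show 0 < -g.2.1
        linarith
      · rcases FPos_tri g.2.2 with h3 | h3 | h3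
        · left
          refine Prod.ext ?_ (Prod.ext ?_ ?_)
          · exact h1
          · exact h2
          · exact h3
        · right; left
          exact Or.inr ⟨h1, Or.inr ⟨h2, h3⟩⟩
        · right; right
          refine Or.inr ⟨by show -g.1 = 0; rw [h1, neg_zero], Or.inr ⟨?_, h3⟩⟩
          show -g.2.1 = 0
          rw [h2, neg_zero]
      · right; left
        exact Or.inr ⟨h1, Or.inl h2⟩
    · right; left
      exact Or.inl h1
    · right; right
      exact Or.inl h1
  have Pasym : ∀ g, P g → P (-g) → False := by
    rintro g (h1 | ⟨h10, h1⟩) (h2 | ⟨h20, h2⟩)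
    · exact FPos_asym h1 h2
    · have h3 : g.1 = 0 := by
        have : -g.1 = 0 := h20
        rwa [neg_eq_zero] at this
      rw [h3] at h1
      exact FPos_zero h1
    · have h3 : g.1 = 0 := h10
      have h4 : (-g).1 = 0 := by
        show -g.1 = 0
        rw [h3, neg_zero]
      rw [h4] at h2
      exact FPos_zero h2
    · rcases h1 with hq | ⟨hq0, hd⟩ <;> rcases h2 with hq' | ⟨hq0', hd'⟩
      · have : (0:ℚ) < -g.2.1 := hq'
        linarith
      · have : -g.2.1 = 0 := hq0'
        have h5 : g.2.1 = 0 := by linarith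
        linarith
      · have : (0:ℚ) < -g.2.1 := hq'
        have h5 : g.2.1 = 0 := hq0
        linarith
      · exact FPos_asym hd hd'
  have hmP : P m := Or.inr ⟨rfl, Or.inl one_pos⟩
  obtain ⟨hTG, hATT⟩ := cone_thresholdGroup P m (fun {g h} => Padd) Ptri Pasym hmP
  -- the embedding
  set f : X → (Quotient (gSet le) →₀ ℚ) × ℚ × (X →₀ ℚ) :=
    fun x => (-(Finsupp.single (Quotient.mk (gSet le) x) 1), ((n x : ℚ),
      -(Finsupp.single x 1))) with hfdef
  have finj : Function.Injective f := by
    intro x y hxy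
    have h3 : -(Finsupp.single x (1:ℚ)) = -(Finsupp.single y 1) :=
      congrArg (fun g => g.2.2) hxy
    have h4 : Finsupp.single x (1:ℚ) = Finsupp.single y 1 := by
      have := congrArg Neg.neg h3
      simpa using this
    exact Finsupp.single_left_injective one_ne_zero h4
  have hcomp : ∀ x y : X, f y - f x - m =
      (Finsupp.single (Quotient.mk (gSet le) x) (1:ℚ)
        - Finsupp.single (Quotient.mk (gSet le) y) 1,
       ((n y : ℚ) - (n x : ℚ) - 1,
        Finsupp.single x (1:ℚ) - Finsupp.single y 1)) := by
    intro x y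
    refine Prod.ext ?_ (Prod.ext ?_ ?_)
    · show -(Finsupp.single (Quotient.mk (gSet le) y) (1:ℚ))
        - -(Finsupp.single (Quotient.mk (gSet le) x) 1) - 0 = _
      abel
    · rfl
    · show -(Finsupp.single y (1:ℚ)) - -(Finsupp.single x 1) - 0 = _
      abel
  have fpos : ∀ x y, Lt le x y → P (f y - f x - m) := by
    intro x y hxy
    rw [hcomp]
    by_cases hgal : Quotient.mk (gSet le) x = Quotient.mk (gSet le) y
    · have hd := NL1 x y hxy hgal
      right
      refine ⟨?_, ?_⟩
      · show Finsupp.single (Quotient.mk (gSet le) x) (1:ℚ)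
          - Finsupp.single (Quotient.mk (gSet le) y) 1 = 0
        rw [hgal, sub_self]
      · by_cases h2 : n y = n x + 1
        · right
          constructor
          · show (n y : ℚ) - (n x : ℚ) - 1 = 0
            rw [h2]
            push_cast
            ring
          · have hxy' : slt x y := by
              refine ⟨hrs x y (Relation.ReflTransGen.single (Or.inl ⟨hxy, h2⟩)), ?_⟩
              rintro rfl
              exact lt_irrefl' hxy
            exact (FPos_single_sub hxy'.2).2 hxy'
        · left
          show 0 < (n y : ℚ) - (n x : ℚ) - 1
          have h3 : n x + 1 < n y := by omega
          have h4 : (n x : ℚ) + 1 < (n y : ℚ) := by exact_mod_cast h3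
          linarith
    · left
      have hlt := galt x y hxy hgal
      exact (FPos_single_sub hgal).2 hlt
  have fneg : ∀ x y, Incomp le x y →
      ¬ (f x = f y ∨ f y - f x = m ∨ P (f y - f x - m)) := by
    intro x y hxy
    have hne : x ≠ y := by
      rintro rfl
      exact hxy.1 (hpo.1 x)
    have hgal : Quotient.mk (gSet le) x = Quotient.mk (gSet le) y :=
      Quotient.sound (Relation.ReflTransGen.single hxy)
    have hn1 := NL2 x y hxy
    have hn2 := NL2 y x (incomp_symm hxy)
    rintro (heq | heq | hP')
    · exact hne (finj heq)
    · have h3 : (f y - f x - m).2.2 = 0 := by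
        rw [heq]
        show m.2.2 - m.2.2 = 0
        rw [sub_self]
      rw [hcomp] at h3
      exact single_sub_ne_zero hne h3
    · rw [hcomp] at hP'
      rcases hP' with h1 | ⟨h10, h1⟩
      · rw [hgal, sub_self] at h1
        exact FPos_zero h1
      · rcases h1 with h2 | ⟨h20, h2⟩
        · have h3 : (n y : ℚ) ≤ (n x : ℚ) + 1 := by
            exact_mod_cast (by omega : n y ≤ n x + 1)
          have h4 : 0 < (n y : ℚ) - (n x : ℚ) - 1 := h2
          linarith
        · have hnn : n y = n x + 1 := by
            have h5 : (n y : ℚ) - (n x : ℚ) - 1 = 0 := h20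
            have h6 : (n y : ℚ) = (n x : ℚ) + 1 := by linarith
            exact_mod_cast h6
          have hxy' : slt x y := (FPos_single_sub hne).1 h2
          have hyx' : slt y x := by
            refine ⟨hrs y x (Relation.ReflTransGen.single
              (Or.inr ⟨incomp_symm hxy, hnn⟩)), Ne.symm hne⟩
          exact hne (san hxy'.1 hyx'.1)
  have fneg2 : ∀ x y, Lt le y x →
      ¬ (f x = f y ∨ f y - f x = m ∨ P (f y - f x - m)) := by
    intro x y hyx
    have hpos := fpos y x hyx
    have hne : x ≠ y := by
      rintro rfl
      exact lt_irrefl' hyx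
    rintro (heq | heq | hP')
    · exact hne (finj heq)
    · have h2 : f x - f y - m = -(m + m) := by
        rw [show f x - f y = -(f y - f x) by abel, heq]
        abel
      rw [h2] at hpos
      exact Pasym _ (Padd hmP hmP) hpos
    · have hsum := Padd hpos hP'
      rw [show f x - f y - m + (f y - f x - m) = -(m + m) by abel] at hsum
      exact Pasym _ (Padd hmP hmP) hsum
  refine ⟨_, inferInstance, _, hTG, hATT, f, finj, ?_⟩
  intro a b
  constructor
  · intro hab
    by_cases heq : a = b
    · exact Or.inl (by rw [heq])
    · have hlt : Lt le a b := ⟨hab, fun hba => heq (hpo.2.2 _ _ hab hba)⟩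
      exact Or.inr (Or.inr (fpos a b hlt))
  · intro h'
    rcases thr_tricho hpo a b with rfl | hlt | hlt | hinc
    · exact hpo.1 a
    · exact hlt.1
    · exact absurd h' (fneg2 a b hlt)
    · exact absurd h' (fneg a b hinc)

/-! ### The easy direction -/

theorem easy_direction {X : Type u} (le : X → X → Prop)
    (h : ∃ (G : Type u) (inst : AddGroup G) (le' : G → G → Prop),
        @IsThresholdGroup G inst le' ∧
        ∃ f : X → G, Function.Injective f ∧ ∀ a b : X, le a b ↔ le' (f a) (f b)) :
    ¬ Embeds2p2 le ∧ ¬ Embeds3p1 le := by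
  obtain ⟨G, inst, le', ⟨hpo', hcomp', hps, htot, hanti⟩, f, hinj, hiff⟩ := h
  have hLt : ∀ a b, Lt le a b ↔ Lt le' (f a) (f b) :=
    fun a b => and_congr (hiff a b) (not_congr (hiff b a))
  have hInc : ∀ a b, Incomp le a b ↔ Incomp le' (f a) (f b) :=
    fun a b => and_congr (not_congr (hiff a b)) (not_congr (hiff b a))
  constructor
  · rintro ⟨a, b, c, d, h1, h2, hac, had, hbc, hbd⟩
    rcases htot (f b) (f d) with hp | hp
    · exact ((hInc a d).1 had).1 (hp _ ((hLt a b).1 h1)).1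
    · exact ((hInc b c).1 hbc).2 (hp _ ((hLt c d).1 h2)).1
  · rintro ⟨a, b, c, d, h1, h2, hda, hdb, hdc⟩
    rcases htot (f b) (f d) with hp | hp
    · exact ((hInc d a).1 hda).2 (hp _ ((hLt a b).1 h1)).1
    · have hs := (hps (f d) (f b)).1 hp
      exact ((hInc d c).1 hdc).1 (hs (f c) ((hLt b c).1 h2)).1

end Semi

/-- For a poset `(X, le)` the following are equivalent:
(i) `le` is a semiorder; (ii) it embeds into an abelian threshold group with attained
threshold; (iii) it embeds into a threshold group. -/
theorem semiorder_iff_embeds_thresholdGroup {X : Type u} (le : X → X → Prop)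
    (hpo : IsPartialOrderRel le) :
    ((¬ Embeds2p2 le ∧ ¬ Embeds3p1 le) ↔
      (∃ (G : Type u) (inst : AddCommGroup G) (le' : G → G → Prop),
        @IsThresholdGroup G inst.toAddGroup le' ∧
        @HasAttainedThreshold G inst.toAddGroup le' ∧
        ∃ f : X → G, Function.Injective f ∧ ∀ a b : X, le a b ↔ le' (f a) (f b))) ∧
    ((¬ Embeds2p2 le ∧ ¬ Embeds3p1 le) ↔
      (∃ (G : Type u) (inst : AddGroup G) (le' : G → G → Prop),
        @IsThresholdGroup G inst le' ∧
        ∃ f : X → G, Function.Injective f ∧ ∀ a b : X, le a b ↔ le' (f a) (f b))) := by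
  constructor
  · constructor
    · rintro ⟨h22, h31⟩
      exact hard_direction hpo h22 h31
    · intro h
      apply easy_direction le
      obtain ⟨G, inst, le', hTG, hATT, f, hf⟩ := h
      exact ⟨G, inst.toAddGroup, le', hTG, f, hf⟩
  · constructor
    · rintro ⟨h22, h31⟩
      obtain ⟨G, inst, le', hTG, hATT, f, hinj, hiff⟩ := hard_direction hpo h22 h31
      exact ⟨G, inst.toAddGroup, le', hTG, f, hinj, hiff⟩
    · exact easy_direction le

end ThrPaper
end

section
/- Let G = (X, +, ≤) be an ordered group and let inc(0) be the set of elements of X incomparable to 0. The following are equivalent: (i) the order of G is a weak order; (ii) inc(0) is an antichain of (X, ≤); (iii) H := inc(0) ∪ {0} is a subgroup of G. Moreover, if these conditions hold, then H is a normal subgroup of G, each coset of H is an antichain and an autonomous subset of (X, ≤), the quotient group G/H carries a compatible total order (x + H < y + H iff x < y for some, equivalently all, representatives), and the order on G is the lexicographical sum of copies of H indexed by the chain G/H: for x, y in distinct cosets, x < y iff x + H < y + H. -/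
namespace ThrPaper

universe u

variable {X : Type*}

/-- For an ordered group `G` with `H := inc(0) ∪ {0}`:
(i) the order is a weak order, (ii) `inc(0)` is an antichain, and (iii) `H` is a subgroup,
are equivalent; and when they hold, `H` is a normal subgroup, its cosets are antichains
and autonomous, the quotient is totally ordered and `G` is the lexicographical sum of the
cosets of `H`. -/
theorem weakOrder_orderedGroup {G : Type*} [AddGroup G] (le : G → G → Prop)
    (hpo : IsPartialOrderRel le) (hc : IsCompat le)
    (H : Set G) (hH : H = {x : G | Incomp le x 0} ∪ {0}) :
    ((¬ Embeds1p2 le) ↔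
      (∀ x ∈ {x : G | Incomp le x 0}, ∀ y ∈ {x : G | Incomp le x 0},
        x ≠ y → Incomp le x y)) ∧
    ((¬ Embeds1p2 le) ↔
      ((0 : G) ∈ H ∧ (∀ x ∈ H, -x ∈ H) ∧ ∀ x ∈ H, ∀ y ∈ H, x + y ∈ H)) ∧
    (¬ Embeds1p2 le →
      -- `H` is a normal subgroup of `G`
      ((∀ x ∈ H, ∀ g : G, -g + x + g ∈ H) ∧
      -- each coset of `H` is an antichain
      (∀ x y : G, -x + y ∈ H → x ≠ y → Incomp le x y) ∧
      -- each coset of `H` is an autonomous subset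
      (∀ x y z : G, -x + y ∈ H → -x + z ∉ H →
        ((le z x ↔ le z y) ∧ (le x z ↔ le y z))) ∧
      -- distinct cosets are comparable: the quotient order is total
      (∀ x y : G, -x + y ∉ H → (Lt le x y ∨ Lt le y x)) ∧
      -- the quotient order is well defined and `G` is the lexicographical sum of the
      -- cosets: for `x, y` in distinct cosets, `x < y` iff `x + H < y + H`
      (∀ x x' y y' : G, -x + x' ∈ H → -y + y' ∈ H → -x + y ∉ H →
        (Lt le x y ↔ Lt le x' y')) ∧
      -- the quotient order is compatible with the group operation
      (∀ a b x y : G, -x + y ∉ H → Lt le x y → Lt le (a + x + b) (a + y + b)))) := by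

  obtain ⟨hrefl, htrans, hanti⟩ := hpo
  -- translation lemmas
  have shiftback : ∀ x y a b : G, le (a + x + b) (a + y + b) → le x y := by
    intro x y a b h
    have := hc (-a) (-b) _ _ h
    simpa [add_assoc] using this
  have key1 : ∀ x y : G, le x y ↔ le 0 (-x + y) := by
    intro x y
    constructor
    · intro h; simpa using hc (-x) 0 x y h
    · intro h; simpa [← add_assoc] using hc x 0 0 (-x + y) h
  have key2 : ∀ x y : G, le y x ↔ le (-x + y) 0 := by
    intro x y
    constructor
    · intro h; simpa using hc (-x) 0 y x h
    · intro h; simpa [← add_assoc] using hc x 0 (-x + y) 0 h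
  have negflip : ∀ z : G, le (-z) 0 ↔ le 0 z := by
    intro z
    constructor
    · intro h; simpa using hc z 0 (-z) 0 h
    · intro h; simpa using hc (-z) 0 0 z h
  have negflip' : ∀ z : G, le 0 (-z) ↔ le z 0 := by
    intro z
    have := negflip (-z)
    simp only [neg_neg] at this
    exact this.symm
  have memH : ∀ z : G, z ∈ H ↔ z = 0 ∨ Incomp le z 0 := by
    intro z
    simp [hH, Set.mem_union, Set.mem_setOf_eq, or_comm]
  have cosH : ∀ x y : G, (-x + y ∈ H) ↔ (x = y ∨ Incomp le x y) := by
    intro x y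
    rw [memH]
    constructor
    · rintro (h | ⟨h1, h2⟩)
      · exact Or.inl (neg_add_eq_zero.mp h)
      · exact Or.inr ⟨fun hxy => h2 ((key1 x y).mp hxy), fun hyx => h1 ((key2 x y).mp hyx)⟩
    · rintro (h | ⟨h1, h2⟩)
      · exact Or.inl (by simp [h])
      · exact Or.inr ⟨fun h' => h2 ((key2 x y).mpr h'), fun h' => h1 ((key1 x y).mpr h')⟩
  have notH : ∀ z : G, z ∉ H ↔ (Lt le 0 z ∨ Lt le z 0) := by
    intro z
    rw [memH]
    constructor
    · intro h
      push_neg at h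
      obtain ⟨hz0, hcomp⟩ := h
      rcases not_and_or.mp hcomp with h1 | h1
      · push_neg at h1
        exact Or.inr ⟨h1, fun h2 => hz0 (hanti z 0 h1 h2)⟩
      · push_neg at h1
        exact Or.inl ⟨h1, fun h2 => hz0 (hanti z 0 h2 h1)⟩
    · rintro (⟨h1, h2⟩ | ⟨h1, h2⟩) <;> rintro (rfl | ⟨k1, k2⟩) <;>
        first
          | exact h2 (hrefl 0)
          | exact k2 h1
          | exact k1 h1
  have notcos : ∀ x y : G, (-x + y ∉ H) ↔ (Lt le x y ∨ Lt le y x) := by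
    intro x y
    rw [notH]
    constructor
    · rintro (⟨h1, h2⟩ | ⟨h1, h2⟩)
      · exact Or.inl ⟨(key1 x y).mpr h1, fun h => h2 ((key2 x y).mp h)⟩
      · exact Or.inr ⟨(key2 x y).mpr h1, fun h => h2 ((key1 x y).mp h)⟩
    · rintro (⟨h1, h2⟩ | ⟨h1, h2⟩)
      · exact Or.inl ⟨(key1 x y).mp h1, fun h => h2 ((key2 x y).mpr h)⟩
      · exact Or.inr ⟨(key2 x y).mp h1, fun h => h2 ((key1 x y).mpr h)⟩
  have negH : ∀ z : G, z ∈ H → -z ∈ H := by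
    intro z hz
    rw [memH] at hz ⊢
    rcases hz with rfl | ⟨h1, h2⟩
    · simp
    · exact Or.inr ⟨fun h => h2 ((negflip z).mp h), fun h => h1 ((negflip' z).mp h)⟩
  -- (i) ↔ antichain
  have Afwd : (¬ Embeds1p2 le) →
      (∀ x ∈ {x : G | Incomp le x 0}, ∀ y ∈ {x : G | Incomp le x 0},
        x ≠ y → Incomp le x y) := by
    intro hw x hx y hy hxy
    simp only [Set.mem_setOf_eq] at hx hy
    by_contra hcmp
    rcases not_and_or.mp hcmp with h | h
    · push_neg at h
      exact hw ⟨x, y, 0, ⟨h, fun h' => hxy (hanti x y h h')⟩,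
        ⟨hx.2, hx.1⟩, ⟨hy.2, hy.1⟩⟩
    · push_neg at h
      exact hw ⟨y, x, 0, ⟨h, fun h' => hxy (hanti x y h' h)⟩,
        ⟨hy.2, hy.1⟩, ⟨hx.2, hx.1⟩⟩
  have Abwd : (∀ x ∈ {x : G | Incomp le x 0}, ∀ y ∈ {x : G | Incomp le x 0},
        x ≠ y → Incomp le x y) → (¬ Embeds1p2 le) := by
    rintro hac ⟨a, b, c, hab, hca, hcb⟩
    have h1 : (-c + a) ∈ {x : G | Incomp le x 0} := by
      simp only [Set.mem_setOf_eq]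
      exact ⟨fun h => hca.2 ((key2 c a).mpr h), fun h => hca.1 ((key1 c a).mpr h)⟩
    have h2 : (-c + b) ∈ {x : G | Incomp le x 0} := by
      simp only [Set.mem_setOf_eq]
      exact ⟨fun h => hcb.2 ((key2 c b).mpr h), fun h => hcb.1 ((key1 c b).mpr h)⟩
    have hne : (-c + a : G) ≠ -c + b := by
      intro h
      have : a = b := by
        have := congrArg (fun t => c + t) h
        simpa using this
      exact hab.2 (this ▸ hrefl a)
    exact (hac _ h1 _ h2 hne).1 (by simpa using hc (-c) 0 a b hab.1)
  -- coset combinators (some need the antichain / closure)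
  have cosSymm : ∀ x y : G, -x + y ∈ H → -y + x ∈ H := by
    intro x y h
    have := negH _ h
    simpa using this
  -- subgroup closure under + from the antichain condition
  have haddlem : (∀ x ∈ {x : G | Incomp le x 0}, ∀ y ∈ {x : G | Incomp le x 0},
        x ≠ y → Incomp le x y) → ∀ x ∈ H, ∀ y ∈ H, Lt le 0 (x + y) → False := by
    intro hac x hx y hy ⟨h1, h2⟩
    have hx0 : x ≠ 0 := by
      rintro rfl; simp at h1 h2
      exact (notH y).mpr (Or.inl ⟨h1, h2⟩) hy
    have hy0 : y ≠ 0 := by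
      rintro rfl; simp at h1 h2
      exact (notH x).mpr (Or.inl ⟨h1, h2⟩) hx
    have hxI : Incomp le x 0 := ((memH x).mp hx).resolve_left hx0
    have hyI : Incomp le y 0 := ((memH y).mp hy).resolve_left hy0
    have hnxI : (-x) ∈ {z : G | Incomp le z 0} := by
      simp only [Set.mem_setOf_eq]
      exact ⟨fun h => hxI.2 ((negflip x).mp h), fun h => hxI.1 ((negflip' x).mp h)⟩
    have hyI' : y ∈ {z : G | Incomp le z 0} := hyI
    have hne : (-x : G) ≠ y := by
      rintro rfl
      simp at h2
      exact h2 (hrefl 0)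
    have hle : le (-x) y := by
      have := (key1 (-x) y).mpr
      simp only [neg_neg] at this
      exact this h1
    exact (hac _ hnxI _ hyI' hne).1 hle
  have AfwdSub : (¬ Embeds1p2 le) →
      ((0 : G) ∈ H ∧ (∀ x ∈ H, -x ∈ H) ∧ ∀ x ∈ H, ∀ y ∈ H, x + y ∈ H) := by
    intro hw
    have hac := Afwd hw
    refine ⟨(memH 0).mpr (Or.inl rfl), negH, ?_⟩
    intro x hx y hy
    by_contra hmem
    rcases (notH _).mp hmem with h | h
    · exact haddlem hac x hx y hy h
    · refine haddlem hac (-y) (negH _ hy) (-x) (negH _ hx) ?_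
      have e : (-y + -x : G) = -(x + y) := by simp
      rw [e]
      exact ⟨(negflip' (x + y)).mpr h.1, fun hk => h.2 ((negflip (x + y)).mp hk)⟩
  have SubBwd : ((0 : G) ∈ H ∧ (∀ x ∈ H, -x ∈ H) ∧ ∀ x ∈ H, ∀ y ∈ H, x + y ∈ H) →
      (¬ Embeds1p2 le) := by
    rintro ⟨_, _, hadd⟩ ⟨a, b, c, hab, hca, hcb⟩
    have h1 : -a + c ∈ H := (cosH a c).mpr (Or.inr ⟨hca.2, hca.1⟩)
    have h2 : -c + b ∈ H := (cosH c b).mpr (Or.inr hcb)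
    have h3 : -a + b ∈ H := by
      have := hadd _ h1 _ h2
      simpa [add_assoc] using this
    exact (notcos a b).mpr (Or.inl hab) h3
  refine ⟨⟨Afwd, Abwd⟩, ⟨AfwdSub, SubBwd⟩, ?_⟩
  intro hw
  obtain ⟨-, -, haddH⟩ := AfwdSub hw
  have cosTrans : ∀ x y z : G, -x + y ∈ H → -y + z ∈ H → -x + z ∈ H := by
    intro x y z h1 h2
    have := haddH _ h1 _ h2
    simpa [add_assoc] using this
  have cosTrans' : ∀ x y z : G, -x + y ∈ H → -x + z ∉ H → -y + z ∉ H :=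
    fun x y z h1 h2 hm => h2 (cosTrans x y z h1 hm)
  -- autonomy helpers
  have aut1 : ∀ x y z : G, -x + y ∈ H → -x + z ∉ H → le z x → le z y := by
    intro x y z hxy hxz hzx
    by_cases hxy' : x = y
    · exact hxy' ▸ hzx
    have hIxy : Incomp le x y := ((cosH x y).mp hxy).resolve_left hxy'
    have hyz : -y + z ∉ H := cosTrans' x y z hxy hxz
    rcases (notcos y z).mp hyz with h | h
    · exact absurd (htrans y z x h.1 hzx) hIxy.2
    · exact h.1
  have aut2 : ∀ x y z : G, -x + y ∈ H → -x + z ∉ H → le x z → le y z := by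
    intro x y z hxy hxz hxz'
    by_cases hxy' : x = y
    · exact hxy' ▸ hxz'
    have hIxy : Incomp le x y := ((cosH x y).mp hxy).resolve_left hxy'
    have hyz : -y + z ∉ H := cosTrans' x y z hxy hxz
    rcases (notcos y z).mp hyz with h | h
    · exact h.1
    · exact absurd (htrans x z y hxz' h.1) hIxy.1
  have lex1 : ∀ x x' y y' : G, -x + x' ∈ H → -y + y' ∈ H → -x + y ∉ H →
      Lt le x y → Lt le x' y' := by
    intro x x' y y' hx hy hxy ⟨h1, h2⟩
    have hxy' : -x' + y ∉ H := cosTrans' x x' y hx hxy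
    have hyx' : -y + x' ∉ H := fun hm => hxy' (cosSymm y x' hm)
    have hy'x' : -y' + x' ∉ H := cosTrans' y y' x' hy hyx'
    have hx'y : le x' y := aut2 x x' y hx hxy h1
    refine ⟨aut1 y y' x' hy hyx' hx'y, fun hle => ?_⟩
    have h3 : le y x' := aut2 y' y x' (cosSymm y y' hy) hy'x' hle
    have h4 : le y x := aut1 x' x y (cosSymm x x' hx) hxy' h3
    exact h2 h4
  refine ⟨?_, ?_, ?_, ?_, ?_, ?_⟩
  · -- normal
    intro x hx g
    rw [memH] at hx ⊢
    rcases hx with rfl | ⟨h1, h2⟩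
    · simp
    · refine Or.inr ⟨fun h => h1 ?_, fun h => h2 ?_⟩
      · have := hc g (-g) _ _ h
        simpa [add_assoc] using this
      · have := hc g (-g) _ _ h
        simpa [add_assoc] using this
  · -- coset antichain
    intro x y hxy hne
    exact ((cosH x y).mp hxy).resolve_left hne
  · -- autonomous
    intro x y z hxy hxz
    constructor
    · exact ⟨aut1 x y z hxy hxz,
        aut1 y x z (cosSymm x y hxy) (cosTrans' x y z hxy hxz)⟩
    · exact ⟨aut2 x y z hxy hxz,
        aut2 y x z (cosSymm x y hxy) (cosTrans' x y z hxy hxz)⟩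
  · -- total quotient
    intro x y hxy
    exact (notcos x y).mp hxy
  · -- lex / well-defined
    intro x x' y y' hx hy hxy
    have hx'y' : -x' + y' ∉ H := by
      intro hm
      exact (cosTrans' x x' y hx hxy) (cosTrans x' y' y hm (cosSymm y y' hy))
    exact ⟨lex1 x x' y y' hx hy hxy,
      lex1 x' x y' y (cosSymm x x' hx) (cosSymm y y' hy) hx'y'⟩
  · -- compat of strict order
    intro a b x y _ hlt
    exact ⟨hc a b x y hlt.1, fun h => hlt.2 (shiftback y x a b h)⟩


end ThrPaper
end

section
/- Let G = (X, +, ≤) be an ordered group. The order ≤ is a semiorder if and only if there exist a compatible total quasi-order ≼ on G and a normal final segment F of (X, ≼) with 0 ∉ F such that for all x, y ∈ G: x < y if and only if y − x ∈ F. -/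
namespace ThrPaper

universe u

variable {X : Type*}

section Aux

variable (le : X → X → Prop)

/-- In a poset without `2 ⊕ 2`: two strict pairs cannot be "crossing-incomparable". -/
theorem no2p2_aux (hpo : IsPartialOrderRel le) (h2 : ¬ Embeds2p2 le)
    {a x b y : X} (hax : Lt le a x) (hby : Lt le b y)
    (hnay : ¬ Lt le a y) (hnbx : ¬ Lt le b x) : False := by
  obtain ⟨_, htr, _⟩ := hpo
  have hnya : ¬ le y a := by
    intro hya
    apply hnbx
    refine ⟨htr _ _ _ (htr _ _ _ hby.1 hya) hax.1, ?_⟩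
    intro hxb
    exact hby.2 (htr _ _ _ (htr _ _ _ hya hax.1) hxb)
  have hnay' : ¬ le a y := fun h => hnay ⟨h, hnya⟩
  have hnxb : ¬ le x b := by
    intro hxb
    exact hnay' (htr _ _ _ (htr _ _ _ hax.1 hxb) hby.1)
  have hnbx' : ¬ le b x := fun h => hnbx ⟨h, hnxb⟩
  have hnab : ¬ le a b := fun h => hnay' (htr _ _ _ h hby.1)
  have hnba : ¬ le b a := fun h => hnbx' (htr _ _ _ h hax.1)
  have hnxy : ¬ le x y := fun h => hnay' (htr _ _ _ hax.1 h)
  have hnyx : ¬ le y x := fun h => hnbx' (htr _ _ _ hby.1 h)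
  exact h2 ⟨a, x, b, y, hax, hby, ⟨hnab, hnba⟩, ⟨hnay', hnya⟩, ⟨hnxb, hnbx'⟩, ⟨hnxy, hnyx⟩⟩

/-- In a poset without `3 ⊕ 1`: a chain of length 3 with a crossing element. -/
theorem no3p1_aux (hpo : IsPartialOrderRel le) (h3 : ¬ Embeds3p1 le)
    {a x b y : X} (hax : Lt le a x) (hxb : Lt le x b)
    (hnay : ¬ Lt le a y) (hnyb : ¬ Lt le y b) : False := by
  obtain ⟨_, htr, _⟩ := hpo
  have hnya : ¬ le y a := by
    intro hya
    apply hnyb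
    refine ⟨htr _ _ _ (htr _ _ _ hya hax.1) hxb.1, ?_⟩
    intro hby
    exact hax.2 (htr _ _ _ (htr _ _ _ hxb.1 hby) hya)
  have hnay' : ¬ le a y := fun h => hnay ⟨h, hnya⟩
  have hnby : ¬ le b y := by
    intro hby
    exact hnay' (htr _ _ _ (htr _ _ _ hax.1 hxb.1) hby)
  have hnyb' : ¬ le y b := fun h => hnyb ⟨h, hnby⟩
  have hnxy : ¬ le x y := fun h => hnay' (htr _ _ _ hax.1 h)
  have hnyx : ¬ le y x := fun h => hnyb' (htr _ _ _ h hxb.1)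
  exact h3 ⟨a, x, b, y, hax, hxb, ⟨hnya, hnay'⟩, ⟨hnyx, hnxy⟩, ⟨hnyb', hnby⟩⟩

theorem notPredLe {le : X → X → Prop} {x y : X} (h : ¬ PredLe le x y) :
    ∃ z, Lt le z x ∧ ¬ Lt le z y := by
  simp only [PredLe, not_forall] at h
  obtain ⟨z, hz1, hz2⟩ := h
  exact ⟨z, hz1, hz2⟩

theorem notSuccLe {le : X → X → Prop} {x y : X} (h : ¬ SuccLe le x y) :
    ∃ z, Lt le y z ∧ ¬ Lt le x z := by
  simp only [SuccLe, not_forall] at h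
  obtain ⟨z, hz1, hz2⟩ := h
  exact ⟨z, hz1, hz2⟩

end Aux

/-- The order of an ordered group `G` is a semiorder iff there are a
compatible total quasi-order `≼` on `G` and a normal final segment `F` of `(G, ≼)` with
`0 ∉ F` such that `x < y` iff `y - x ∈ F`. -/
theorem semiorder_iff_finalSegment {G : Type*} [AddGroup G] (le : G → G → Prop)
    (hpo : IsPartialOrderRel le) (hc : IsCompat le) :
    (¬ Embeds2p2 le ∧ ¬ Embeds3p1 le) ↔
      ∃ (ple : G → G → Prop) (F : Set G),
        -- `≼` is a compatible total quasi-order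
        (∀ x, ple x x) ∧ (∀ x y z, ple x y → ple y z → ple x z) ∧
        IsTotalRel ple ∧ IsCompat ple ∧
        -- `F` is a normal final segment not containing `0`
        (∀ x ∈ F, ∀ y, ple x y → y ∈ F) ∧
        (∀ x ∈ F, ∀ u : G, -u + x + u ∈ F) ∧
        (0 : G) ∉ F ∧
        -- the strict order of `le` is given by `F`
        (∀ x y : G, Lt le x y ↔ y - x ∈ F) := by
  obtain ⟨hrefl, htr, hanti⟩ := hpo
  constructor
  · rintro ⟨h2, h3⟩
    have ltc : ∀ a b x y : G, Lt le x y → Lt le (a + x + b) (a + y + b) := by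
      rintro a b x y ⟨hl, hnl⟩
      refine ⟨hc a b x y hl, fun h => hnl ?_⟩
      have := hc (-a) (-b) _ _ h
      simpa [add_assoc] using this
    refine ⟨fun x y => PredLe le x y ∧ SuccLe le x y, {z | Lt le 0 z},
      fun x => ⟨fun z h => h, fun z h => h⟩,
      fun x y z hxy hyz => ⟨fun w h => hyz.1 w (hxy.1 w h), fun w h => hxy.2 w (hyz.2 w h)⟩,
      ?_, ?_, ?_, ?_, ?_, ?_⟩
    · -- totality
      intro x y
      by_contra hcon
      rw [not_or] at hcon
      rcases not_and_or.mp hcon.1 with hP | hP <;> rcases not_and_or.mp hcon.2 with hQ | hQ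
      · obtain ⟨z1, hz1x, hz1y⟩ := notPredLe hP
        obtain ⟨z2, hz2y, hz2x⟩ := notPredLe hQ
        exact no2p2_aux le ⟨hrefl, htr, hanti⟩ h2 hz1x hz2y hz1y hz2x
      · obtain ⟨z1, hz1x, hz1y⟩ := notPredLe hP
        obtain ⟨z2, hxz2, hyz2⟩ := notSuccLe hQ
        exact no3p1_aux le ⟨hrefl, htr, hanti⟩ h3 hz1x hxz2 hz1y hyz2
      · obtain ⟨z1, hyz1, hxz1⟩ := notSuccLe hP
        obtain ⟨z2, hz2y, hz2x⟩ := notPredLe hQ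
        exact no3p1_aux le ⟨hrefl, htr, hanti⟩ h3 hz2y hyz1 hz2x hxz1
      · obtain ⟨z1, hyz1, hxz1⟩ := notSuccLe hP
        obtain ⟨z2, hxz2, hyz2⟩ := notSuccLe hQ
        exact no2p2_aux le ⟨hrefl, htr, hanti⟩ h2 hxz2 hyz1 hxz1 hyz2
    · -- compatibility
      rintro a b x y ⟨hp, hs⟩
      constructor
      · intro z hz
        have h1 := ltc (-a) (-b) _ _ hz
        have h2' : Lt le (-a + z + -b) x := by simpa [add_assoc] using h1
        have h3' := ltc a b _ _ (hp _ h2')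
        simpa [add_assoc] using h3'
      · intro z hz
        have h1 := ltc (-a) (-b) _ _ hz
        have h2' : Lt le y (-a + z + -b) := by simpa [add_assoc] using h1
        have h3' := ltc a b _ _ (hs _ h2')
        simpa [add_assoc] using h3'
    · -- final segment
      intro x hx y hxy
      exact hxy.1 0 hx
    · -- normal
      intro x hx u
      have := ltc (-u) u 0 x hx
      simpa using this
    · -- 0 ∉ F
      exact fun h => h.2 (hrefl 0)
    · -- the iff
      intro x y
      rw [sub_eq_add_neg]
      constructor
      · intro h
        have := ltc 0 (-x) x y h
        simpa [add_assoc] using this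
      · intro h
        have := ltc 0 x 0 (y + -x) h
        simpa [add_assoc] using this
  · rintro ⟨ple, F, hr, ht, htot, hcp, hfin, hnorm, h0, hiff⟩
    constructor
    · rintro ⟨a, b, c, d, hab, hcd, hac, had, hbc, hbd⟩
      have h1 : b - a ∈ F := (hiff a b).mp hab
      have h2 : d - c ∈ F := (hiff c d).mp hcd
      have h3 : b - c ∉ F := fun h => hbc.2 ((hiff c b).mpr h).1
      have h4 : d - a ∉ F := fun h => had.1 ((hiff a d).mpr h).1
      have h5 : ple (d - a) (b - a) :=
        (htot _ _).resolve_left (fun h => h4 (hfin _ h1 _ h))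
      have h6 : ple d b := by
        have := hcp 0 a _ _ h5
        simpa [sub_eq_add_neg, add_assoc] using this
      have h7 : ple (d - c) (b - c) := by
        have := hcp 0 (-c) _ _ h6
        simpa [sub_eq_add_neg, add_assoc] using this
      exact h3 (hfin _ h2 _ h7)
    · rintro ⟨a, b, c, d, hab, hbc, hda, hdb, hdc⟩
      have h1 : b - a ∈ F := (hiff a b).mp hab
      have h2 : c - b ∈ F := (hiff b c).mp hbc
      have h3 : c - d ∉ F := fun h => hdc.1 ((hiff d c).mpr h).1
      have h4 : d - a ∉ F := fun h => hda.2 ((hiff a d).mpr h).1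
      have h5 : ple (c - d) (c - b) :=
        (htot _ _).resolve_left (fun h => h3 (hfin _ h2 _ h))
      have h6 : ple (-d) (-b) := by
        have := hcp (-c) 0 _ _ h5
        simpa [sub_eq_add_neg, add_assoc] using this
      have h7 : ple b d := by
        have := hcp b d _ _ h6
        simpa [add_assoc] using this
      have h8 : ple (b - a) (d - a) := by
        have := hcp 0 (-a) _ _ h7
        simpa [sub_eq_add_neg, add_assoc] using this
      exact h4 (hfin _ h1 _ h8)


end ThrPaper
end

section
/- Every nontrivial torsion-free abelian group can be equipped with a compatible threshold order which is not a total order. -/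
namespace ThrPaper

universe u

variable {X : Type*}

/-- A positive cone in an abelian group. -/
def IsCone {G : Type*} [AddCommGroup G] (P : Set G) : Prop :=
  (0 : G) ∈ P ∧ (∀ a b, a ∈ P → b ∈ P → a + b ∈ P) ∧ ∀ a, a ∈ P → -a ∈ P → a = 0

theorem cone_nsmul {G : Type*} [AddCommGroup G] {P : Set G} (hP : IsCone P)
    {p : G} (hp : p ∈ P) : ∀ n : ℕ, n • p ∈ P := by
  intro n
  induction n with
  | zero => simpa using hP.1
  | succ k ih => rw [succ_nsmul]; exact hP.2.1 _ _ ih hp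

theorem exists_maximal_cone (G : Type*) [AddCommGroup G] :
    ∃ P : Set G, Maximal IsCone P := by
  obtain ⟨P, -, hP⟩ := zorn_subset_nonempty {P : Set G | IsCone P}
    (fun c hc hchain hne => by
      refine ⟨⋃₀ c, ⟨?_, ?_, ?_⟩, fun s hs => Set.subset_sUnion_of_mem hs⟩
      · obtain ⟨s, hs⟩ := hne
        exact Set.mem_sUnion.2 ⟨s, hs, (hc hs).1⟩
      · rintro a b ⟨s, hs, ha⟩ ⟨t, ht, hb⟩
        rcases hchain.total hs ht with h | h
        · exact ⟨t, ht, (hc ht).2.1 a b (h ha) hb⟩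
        · exact ⟨s, hs, (hc hs).2.1 a b ha (h hb)⟩
      · rintro a ⟨s, hs, ha⟩ ⟨t, ht, hna⟩
        rcases hchain.total hs ht with h | h
        · exact (hc ht).2.2 a (h ha) hna
        · exact (hc hs).2.2 a ha (h hna))
    {0} ⟨rfl, by rintro a b rfl rfl; simp, by rintro a rfl _; rfl⟩
  exact ⟨P, hP⟩

theorem cone_extend {G : Type*} [AddCommGroup G] {P : Set G} (hP : Maximal IsCone P)
    {x : G} (hx : x ∉ P) : ∃ k : ℕ, 0 < k ∧ -(k • x) ∈ P := by
  set P' : Set G := {g | ∃ p ∈ P, ∃ n : ℕ, g = p + n • x} with hP'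
  have hsub : P ⊆ P' := fun p hp => ⟨p, hp, 0, by simp⟩
  have hxP' : x ∈ P' := ⟨0, hP.prop.1, 1, by simp⟩
  by_cases hcone : IsCone P'
  · exact absurd (hP.2 hcone hsub hxP') hx
  · have h0 : (0 : G) ∈ P' := hsub hP.prop.1
    have hadd : ∀ a b, a ∈ P' → b ∈ P' → a + b ∈ P' := by
      rintro a b ⟨p, hp, n, rfl⟩ ⟨q, hq, m, rfl⟩
      exact ⟨p + q, hP.prop.2.1 p q hp hq, n + m, by rw [add_smul]; abel⟩
    have hex : ∃ a, a ∈ P' ∧ -a ∈ P' ∧ a ≠ 0 := by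
      by_contra h
      push_neg at h
      exact hcone ⟨h0, hadd, fun a ha hna => h a ha hna⟩
    obtain ⟨a, ⟨p, hp, n, rfl⟩, ⟨q, hq, m, hqe⟩, hane⟩ := hex
    have hk : (p + q) + (n + m) • x = 0 := by
      rw [add_smul]
      have h' : -(p + n • x) = q + m • x := hqe
      linear_combination (norm := abel_nf) -h'
    rcases Nat.eq_zero_or_pos (n + m) with h0' | hpos
    · obtain ⟨hn, hm⟩ := Nat.add_eq_zero.mp h0'
      subst hn hm
      simp only [zero_smul, add_zero] at hk hqe hane
      exact absurd (hP.prop.2.2 p hp (by rw [hqe]; exact hq)) hane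
    · refine ⟨n + m, hpos, ?_⟩
      have h2 : -((n + m) • x) = p + q := by linear_combination (norm := abel_nf) -hk
      rw [h2]
      exact hP.prop.2.1 p q hp hq

theorem cone_total {G : Type*} [AddCommGroup G]
    (htf : ∀ (n : ℕ) (x : G), 0 < n → n • x = 0 → x = 0)
    {P : Set G} (hP : Maximal IsCone P) : ∀ x : G, x ∈ P ∨ -x ∈ P := by
  intro x
  by_contra h
  push_neg at h
  obtain ⟨hx, hnx⟩ := h
  obtain ⟨k, hk, hkx⟩ := cone_extend hP hx
  obtain ⟨m, hm, hmx⟩ := cone_extend hP hnx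
  rw [smul_neg, neg_neg] at hmx
  have h1 : (k * m) • x ∈ P := by
    rw [mul_smul]; exact cone_nsmul hP.prop hmx k
  have h2 : -((k * m) • x) ∈ P := by
    have : -((k * m) • x) = m • (-(k • x)) := by rw [smul_neg, mul_comm k m, mul_smul]
    rw [this]; exact cone_nsmul hP.prop hkx m
  have hz : (k * m) • x = 0 := hP.prop.2.2 _ h1 h2
  have : x = 0 := htf (k * m) x (Nat.mul_pos hk hm) hz
  exact hx (this ▸ hP.prop.1)


/-- Every nontrivial torsion-free abelian group can be equipped with a
compatible threshold order which is not a total order. -/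
theorem torsionFree_abelian_has_threshold_not_total (G : Type*) [AddCommGroup G]
    (hnt : ∃ x : G, x ≠ 0)
    (htf : ∀ (n : ℕ) (x : G), 0 < n → n • x = 0 → x = 0) :
    ∃ le : G → G → Prop,
      IsPartialOrderRel le ∧ IsCompat le ∧ IsThresholdOrder le ∧ ¬ IsTotalRel le := by
  obtain ⟨P, hP⟩ := exists_maximal_cone G
  have htot := cone_total htf hP
  obtain ⟨h0P, hadd, hanti⟩ := hP.prop
  obtain ⟨e, he⟩ := hnt
  obtain ⟨w, hwP, hw0⟩ : ∃ w : G, w ∈ P ∧ w ≠ 0 := by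
    rcases htot e with h | h
    · exact ⟨e, h, he⟩
    · exact ⟨-e, h, neg_ne_zero.2 he⟩
  set u : G := w + w with hu_def
  have huP : u ∈ P := hadd _ _ hwP hwP
  have hmul : ∀ n : ℕ, 0 < n → n • w ≠ 0 := fun n hn h => hw0 (htf n w hn h)
  set le : G → G → Prop := fun x y => x = y ∨ y - x - u ∈ P with hle_def
  have hgap_asym : ∀ x y : G, y - x - u ∈ P → x - y - u ∈ P → False := by
    intro x y h1 h2
    have hs : -(u + u) ∈ P := by
      have h3 := hadd _ _ h1 h2
      have e4 : (y - x - u) + (x - y - u) = -(u + u) := by abel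
      rwa [e4] at h3
    have hz : u + u = 0 := hanti _ (hadd _ _ huP huP) hs
    exact hmul 4 (by norm_num) (by
      have e4 : (4 : ℕ) • w = u + u := by rw [hu_def]; abel
      rw [e4, hz])
  have hune : -u ∉ P := by
    intro h
    exact hmul 2 (by norm_num) (by
      have e2 : (2 : ℕ) • w = u := by rw [hu_def]; abel
      rw [e2]; exact hanti _ huP h)
  have hpartial : IsPartialOrderRel le := by
    refine ⟨fun x => Or.inl rfl, ?_, ?_⟩
    · rintro x y z (rfl | h1) (rfl | h2)
      · exact Or.inl rfl
      · exact Or.inr h2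
      · exact Or.inr h1
      · refine Or.inr ?_
        have h3 := hadd _ _ (hadd _ _ h1 h2) huP
        have e3 : (y - x - u) + (z - y - u) + u = z - x - u := by abel
        rwa [e3] at h3
    · rintro x y (rfl | h1) h2
      · rfl
      · rcases h2 with rfl | h2
        · rfl
        · exact absurd h2 (fun h => hgap_asym x y h1 h)
  have hcompat : IsCompat le := by
    rintro a b x y (rfl | h)
    · exact Or.inl rfl
    · refine Or.inr ?_
      have e3 : (a + y + b) - (a + x + b) - u = y - x - u := by abel
      rwa [e3]
  have hLt : ∀ x y : G, Lt le x y ↔ y - x - u ∈ P := by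
    intro x y
    constructor
    · rintro ⟨h1 | h1, h2⟩
      · exact absurd (Or.inl h1.symm) h2
      · exact h1
    · intro h
      refine ⟨Or.inr h, ?_⟩
      rintro (rfl | hg)
      · have e3 : y - y - u = -u := by abel
        rw [e3] at h
        exact hune h
      · exact hgap_asym x y h hg
  have hPred : ∀ x y : G, PredLe le x y ↔ y - x ∈ P := by
    intro x y
    constructor
    · intro h
      have h1 : Lt le (x - u) x := by
        rw [hLt]
        have e3 : x - (x - u) - u = 0 := by abel
        rw [e3]; exact h0P
      have h2 := (hLt _ _).1 (h _ h1)
      have e3 : y - (x - u) - u = y - x := by abel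
      rwa [e3] at h2
    · intro h z hz
      rw [hLt] at hz ⊢
      have h3 := hadd _ _ hz h
      have e3 : (x - z - u) + (y - x) = y - z - u := by abel
      rwa [e3] at h3
  have hSucc : ∀ x y : G, SuccLe le x y ↔ y - x ∈ P := by
    intro x y
    constructor
    · intro h
      have h1 : Lt le y (y + u) := by
        rw [hLt]
        have e3 : y + u - y - u = 0 := by abel
        rw [e3]; exact h0P
      have h2 := (hLt _ _).1 (h _ h1)
      have e3 : y + u - x - u = y - x := by abel
      rwa [e3] at h2
    · intro h z hz
      rw [hLt] at hz ⊢
      have h3 := hadd _ _ hz h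
      have e3 : (z - y - u) + (y - x) = z - x - u := by abel
      rwa [e3] at h3
  have hthr : IsThresholdOrder le := by
    refine ⟨fun x y => by rw [hPred, hSucc], fun x y => ?_, fun x y h1 h2 => ?_⟩
    · rcases htot (y - x) with h | h
      · exact Or.inl ((hPred x y).2 h)
      · refine Or.inr ((hPred y x).2 ?_)
        rwa [neg_sub] at h
    · rw [hPred] at h1 h2
      have h3 : y - x = 0 := by
        refine hanti _ h1 ?_
        rwa [neg_sub]
      exact (sub_eq_zero.1 h3).symm
  refine ⟨le, hpartial, hcompat, hthr, ?_⟩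
  intro h
  rcases h 0 w with h | h
  · rcases h with h | h
    · exact hw0 h.symm
    · have e3 : w - 0 - u = -w := by rw [hu_def]; abel
      rw [e3] at h
      exact hw0 (hanti _ hwP h)
  · rcases h with h | h
    · exact hw0 h
    · have e3 : (0 : G) - w - u = -(w + u) := by abel
      rw [e3] at h
      have hz : w + u = 0 := hanti _ (hadd _ _ hwP huP) h
      exact hmul 3 (by norm_num) (by
        have e4 : (3 : ℕ) • w = w + u := by rw [hu_def]; abel
        rw [e4, hz])

end ThrPaper
end

section
/- Let G be a nontrivial finitely generated group equipped with a compatible total order ≼. Then there exists a nonempty normal final segment F of (G, ≼) with 0 ∉ F, contained in the set of strictly positive elements, such that I := G \ (−F ∪ F) is not a subgroup of G. -/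
namespace ThrPaper

universe u

variable {X : Type*}

theorem nat_aux (c : ℕ) : 2*(2*c+2)*c + 2 < 2^(2*c+2) := by
  induction c with
  | zero => norm_num
  | succ c ih =>
    have e : 2*(c+1)+2 = (2*c+2)+2 := by ring
    rw [e, pow_add]
    nlinarith [ih]


/-- Every nontrivial finitely generated totally ordered group admits a
nonempty normal final segment `F` of strictly positive elements with `0 ∉ F` such that
`I := G \ (-F ∪ F)` is not a subgroup. -/
theorem finitelyGenerated_finalSegment_not_subgroup (G : Type*) [AddGroup G]
    (hfg : AddGroup.FG G) (hnt : ∃ x : G, x ≠ 0)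
    (ple : G → G → Prop)
    (hpo : IsPartialOrderRel ple) (htot : IsTotalRel ple) (hc : IsCompat ple) :
    ∃ F : Set G,
      F.Nonempty ∧
      (∀ x ∈ F, ∀ y, ple x y → y ∈ F) ∧
      (∀ x ∈ F, ∀ u : G, -u + x + u ∈ F) ∧
      (0 : G) ∉ F ∧
      (∀ x ∈ F, Lt ple 0 x) ∧
      ¬ ((0 : G) ∈ {x : G | -x ∉ F ∧ x ∉ F} ∧
         (∀ x ∈ {x : G | -x ∉ F ∧ x ∉ F}, -x ∈ {x : G | -x ∉ F ∧ x ∉ F}) ∧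
         ∀ x ∈ {x : G | -x ∉ F ∧ x ∉ F}, ∀ y ∈ {x : G | -x ∉ F ∧ x ∉ F},
           x + y ∈ {x : G | -x ∉ F ∧ x ∉ F}) := by
  classical
  obtain ⟨x₀, hx₀⟩ := hnt
  obtain ⟨lrefl, ltrans, lantisymm⟩ := hpo
  -- basic order-arithmetic lemmas
  have addle : ∀ {x y a b : G}, ple x a → ple y b → ple (x + y) (a + b) := by
    intro x y a b h1 h2
    have h3 : ple (x + y) (x + b) := by simpa using hc x 0 y b h2
    have h4 : ple (x + b) (a + b) := by simpa using hc 0 b x a h1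
    exact ltrans _ _ _ h3 h4
  have negle : ∀ {x y : G}, ple x y → ple (-y) (-x) := by
    intro x y h
    have := hc (-x) (-y) x y h
    simpa [add_assoc] using this
  -- generators
  obtain ⟨S, hS⟩ := hfg.out
  -- a maximum of any finset
  have exmax : ∀ T : Finset G, ∃ m : G, ∀ a ∈ T, ple a m := by
    intro T
    induction T using Finset.induction with
    | empty => exact ⟨0, by simp⟩
    | @insert a T _ ih =>
      obtain ⟨m, hm⟩ := ih
      rcases htot a m with h1 | h1
      · exact ⟨m, by
          intro b hb
          rcases Finset.mem_insert.mp hb with rfl | hb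
          · exact h1
          · exact hm b hb⟩
      · exact ⟨a, by
          intro b hb
          rcases Finset.mem_insert.mp hb with rfl | hb
          · exact lrefl b
          · exact ltrans _ _ _ (hm b hb) h1⟩
  obtain ⟨g, hg⟩ := exmax (insert x₀ (insert (-x₀) (S ∪ S.image (fun a => -a))))
  have hx0g : ple x₀ g := hg _ (by simp)
  have hnx0g : ple (-x₀) g := hg _ (by simp)
  have hSg : ∀ s ∈ S, ple s g := fun s hs => hg s (by simp [hs])
  have hnSg : ∀ s ∈ S, ple (-s) g := fun s hs =>
    hg (-s) (by simp [hs])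
  have hgpos : ¬ ple g 0 := by
    intro h
    have h1 : ple x₀ 0 := ltrans _ _ _ hx0g h
    have h2 : ple (-x₀) 0 := ltrans _ _ _ hnx0g h
    have h3 : ple 0 x₀ := by simpa using negle h2
    exact hx₀ (lantisymm _ _ h1 h3)
  have h0g : ple 0 g := (htot 0 g).resolve_right hgpos
  -- nsmul lemmas
  have smul_le : ∀ (k : ℕ) {x y : G}, ple x y → ple (k • x) (k • y) := by
    intro k
    induction k with
    | zero => intro x y _; simpa using lrefl (0 : G)
    | succ k ih =>
      intro x y h
      have := addle (ih h) h
      simpa [succ_nsmul] using this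
  have smul_nonneg : ∀ k : ℕ, ple 0 (k • g) := by
    intro k
    have := smul_le k h0g
    simpa using this
  have g_le_smul : ∀ k : ℕ, 1 ≤ k → ple g (k • g) := by
    intro k hk
    obtain ⟨m, rfl⟩ := Nat.exists_eq_add_of_le hk
    have := addle (lrefl g) (smul_nonneg m)
    simpa [add_nsmul] using this
  -- bound every element by a multiple of g
  have bound : ∀ x : G, ∃ n : ℕ, ple x (n • g) ∧ ple (-x) (n • g) := by
    intro x
    have hx : x ∈ AddSubgroup.closure (S : Set G) := by
      rw [hS]; exact AddSubgroup.mem_top x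
    induction hx using AddSubgroup.closure_induction with
    | mem s hs =>
      exact ⟨1, by simpa using hSg s hs, by simpa using hnSg s hs⟩
    | zero => exact ⟨0, by simpa using lrefl (0 : G), by simpa using lrefl (0 : G)⟩
    | add x y hx hy ihx ihy =>
      obtain ⟨n, hn1, hn2⟩ := ihx
      obtain ⟨m, hm1, hm2⟩ := ihy
      refine ⟨n + m, ?_, ?_⟩
      · have := addle hn1 hm1
        simpa [add_nsmul] using this
      · have := addle hm2 hn2
        rw [neg_add_rev]
        simpa [Nat.add_comm n m, add_nsmul] using this
    | neg x hx ihx =>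
      obtain ⟨n, hn1, hn2⟩ := ihx
      exact ⟨n, hn2, by simpa using hn1⟩
  -- the key lemma: every conjugate of g+g strictly exceeds g
  have key : ∀ u : G, Lt ple g (-u + (g + g) + u) := by
    intro u
    by_contra h
    have hcg : ple (-u + (g + g) + u) g := by
      by_contra hc2
      exact h ⟨(htot g _).resolve_right hc2, hc2⟩
    have h2 : ple (g + g) (u + g + -u) := by
      have := hc u (-u) _ _ hcg
      simpa [add_assoc] using this
    have A : ∀ k : ℕ, ple ((2 ^ k) • g) (k • u + g + -(k • u)) := by
      intro k
      induction k with
      | zero => simpa using lrefl g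
      | succ k ih =>
        have e1 : (2 ^ (k+1)) • g = (2 ^ k) • g + (2 ^ k) • g := by
          rw [pow_succ, mul_two, add_nsmul]
        have s1 : ple ((2 ^ (k+1)) • g) ((k • u + g + -(k • u)) + (k • u + g + -(k • u))) := by
          rw [e1]; exact addle ih ih
        have e2 : (k • u + g + -(k • u)) + (k • u + g + -(k • u)) = k • u + (g + g) + -(k • u) := by
          simp [add_assoc]
        have s2 : ple (k • u + (g + g) + -(k • u)) (k • u + (u + g + -u) + -(k • u)) :=
          hc _ _ _ _ h2
        have e3 : k • u + (u + g + -u) + -(k • u) = (k+1) • u + g + -((k+1) • u) := by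
          simp [succ_nsmul, neg_add_rev, add_assoc]
        rw [e2] at s1
        rw [e3] at s2
        exact ltrans _ _ _ s1 s2
    obtain ⟨n, hun, hnun⟩ := bound u
    have hb1 : ∀ k : ℕ, ple (k • u) ((k * n) • g) := by
      intro k
      have := smul_le k hun
      rw [← mul_nsmul] at this
      simpa [Nat.mul_comm] using this
    have hb2 : ∀ k : ℕ, ple (-(k • u)) ((k * n) • g) := by
      intro k
      have := smul_le k hnun
      rw [← mul_nsmul] at this
      simpa [neg_nsmul, Nat.mul_comm] using this
    have hck : ∀ k : ℕ, ple ((2 ^ k) • g) ((2 * k * n + 1) • g) := by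
      intro k
      have t1 : ple (k • u + g + -(k • u)) ((k * n) • g + g + (k * n) • g) :=
        addle (addle (hb1 k) (lrefl g)) (hb2 k)
      have e : (k * n) • g + g + (k * n) • g = (2 * k * n + 1) • g := by
        have : 2 * k * n + 1 = (k * n) + 1 + (k * n) := by ring
        rw [this, add_nsmul, add_nsmul, one_nsmul]
      rw [e] at t1
      exact ltrans _ _ _ (A k) t1
    -- numeric contradiction
    have hnum : 2 * (2 * n + 2) * n + 1 < 2 ^ (2 * n + 2) := by
      have := nat_aux n
      omega
    have hab := hck (2 * n + 2)
    set a := 2 ^ (2 * n + 2) with ha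
    set b := 2 * (2 * n + 2) * n + 1 with hb
    have e : a = b + (a - b) := by omega
    rw [e, add_nsmul] at hab
    have hm : ple ((a - b) • g) 0 := by
      have := hc (-(b • g)) 0 _ _ hab
      simpa [add_assoc] using this
    have hgm : ple g ((a - b) • g) := g_le_smul _ (by omega)
    exact hgpos (ltrans _ _ _ hgm hm)
  -- assemble
  refine ⟨{x : G | ∀ u : G, Lt ple g (-u + x + u)}, ⟨g + g, key⟩, ?_, ?_, ?_, ?_, ?_⟩
  · -- final segment
    intro x hx y hxy u
    obtain ⟨h1, h2⟩ := hx u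
    have h3 : ple (-u + x + u) (-u + y + u) := hc _ _ _ _ hxy
    exact ⟨ltrans _ _ _ h1 h3, fun hb => h2 (ltrans _ _ _ h3 hb)⟩
  · -- normal
    intro x hx u v
    have e : -v + (-u + x + u) + v = -(u + v) + x + (u + v) := by
      simp [neg_add, add_assoc]
    rw [e]
    exact hx (u + v)
  · -- 0 ∉ F
    intro h
    obtain ⟨h1, _⟩ := h 0
    simp only [neg_zero, add_zero, zero_add] at h1
    exact hgpos h1
  · -- positivity
    intro x hx
    obtain ⟨h1, h2⟩ := hx 0
    simp only [neg_zero, add_zero, zero_add] at h1 h2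
    exact ⟨ltrans _ _ _ h0g h1, fun hb => h2 (ltrans _ _ _ hb h0g)⟩
  · -- not a subgroup
    rintro ⟨-, -, hadd⟩
    have hgI : g ∈ {x : G | (-x ∉ {x : G | ∀ u : G, Lt ple g (-u + x + u)}) ∧
        x ∉ {x : G | ∀ u : G, Lt ple g (-u + x + u)}} := by
      constructor
      · intro h
        obtain ⟨h1, _⟩ := h 0
        simp only [neg_zero, add_zero, zero_add] at h1
        have hng : ple (-g) 0 := by simpa using negle h0g
        exact hgpos (ltrans _ _ _ h1 hng)
      · intro h
        obtain ⟨_, h2⟩ := h 0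
        simp only [neg_zero, add_zero, zero_add] at h2
        exact h2 (lrefl g)
    exact (hadd g hgI g hgI).2 key

end ThrPaper
end

section
/- Let S be a nonempty finite set. The free group on S can be equipped with a compatible partial order which is a semiorder but not a weak order. -/
namespace ThrPaper

universe u

variable {X : Type*}

/-- The free group on a nonempty finite set can be equipped with a
compatible partial order which is a semiorder but not a weak order. -/
theorem freeGroup_has_semiorder_not_weakOrder (S : Type*) [Fintype S] [Nonempty S] :
    ∃ le : FreeGroup S → FreeGroup S → Prop,
      IsPartialOrderRel le ∧
      (∀ a b x y : FreeGroup S, le x y → le (a * x * b) (a * y * b)) ∧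
      ¬ Embeds2p2 le ∧ ¬ Embeds3p1 le ∧ Embeds1p2 le := by
  classical
  set φ : FreeGroup S →* Multiplicative ℤ :=
    FreeGroup.lift (fun _ : S => Multiplicative.ofAdd (1 : ℤ)) with hφ
  set f : FreeGroup S → ℤ := fun x => Multiplicative.toAdd (φ x) with hf
  have fmul : ∀ x y : FreeGroup S, f (x * y) = f x + f y := by
    intro x y; simp [hf, map_mul]
  have neq : ∀ u v : FreeGroup S, f u ≠ f v → u ≠ v := fun u v h e => h (e ▸ rfl)
  refine ⟨fun x y => x = y ∨ f x + 2 ≤ f y, ⟨?_, ?_, ?_⟩, ?_, ?_, ?_, ?_⟩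
  · intro x; exact Or.inl rfl
  · rintro x y z (rfl | h1) (rfl | h2)
    · exact Or.inl rfl
    · exact Or.inr h2
    · exact Or.inr h1
    · exact Or.inr (by omega)
  · rintro x y (rfl | h1) h2
    · rfl
    · rcases h2 with rfl | h2 <;> omega
  · rintro a b x y (rfl | h)
    · exact Or.inl rfl
    · refine Or.inr ?_
      rw [fmul, fmul, fmul, fmul]; omega
  · rintro ⟨a, b, c, d, ⟨hab, hab'⟩, ⟨hcd, hcd'⟩, ⟨h1, h1'⟩, ⟨h2, h2'⟩, ⟨h3, h3'⟩, _⟩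
    rcases hab with rfl | hab
    · exact hab' (Or.inl rfl)
    rcases hcd with rfl | hcd
    · exact hcd' (Or.inl rfl)
    have e2 : ¬ (f a + 2 ≤ f d) := fun h => h2 (Or.inr h)
    exact h3' (Or.inr (by omega))
  · rintro ⟨a, b, c, d, ⟨hab, hab'⟩, ⟨hbc, hbc'⟩, ⟨h1, h1'⟩, _, ⟨h3, h3'⟩⟩
    rcases hab with rfl | hab
    · exact hab' (Or.inl rfl)
    rcases hbc with rfl | hbc
    · exact hbc' (Or.inl rfl)
    have e1 : ¬ (f a + 2 ≤ f d) := fun h => h1' (Or.inr h)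
    exact h3 (Or.inr (by omega))
  · obtain ⟨s⟩ := ‹Nonempty S›
    have fs : f (FreeGroup.of s) = 1 := by
      simp [hf, hφ, FreeGroup.lift_apply_of]
    have f1 : f (1 : FreeGroup S) = 0 := by simp [hf]
    have fss : f (FreeGroup.of s * FreeGroup.of s) = 2 := by rw [fmul, fs]; omega
    refine ⟨1, FreeGroup.of s * FreeGroup.of s, FreeGroup.of s, ⟨?_, ?_⟩, ⟨?_, ?_⟩, ⟨?_, ?_⟩⟩
    · exact Or.inr (by omega)
    · rintro (h | h)
      · exact neq _ _ (by omega) h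
      · omega
    · rintro (h | h)
      · exact neq _ _ (by omega) h
      · omega
    · rintro (h | h)
      · exact neq _ _ (by omega) h
      · omega
    · rintro (h | h)
      · exact neq _ _ (by omega) h
      · omega
    · rintro (h | h)
      · exact neq _ _ (by omega) h
      · omega

end ThrPaper
end

section
/- Let G = (X, +, ≤) be an ordered group, let inc(0) be the set of elements incomparable to 0, and let I(G)(0) be the connected component of 0 in the incomparability graph of (X, ≤). Then I(G)(0) is the least subgroup of G containing inc(0) ∪ {0}; it is a normal subgroup of G and a convex subset of (X, ≤); the quotient group G/I(G)(0) carries a compatible total order (x + I(G)(0) < y + I(G)(0) iff x < y for representatives in distinct cosets); and the order on G is the lexicographical sum of the cosets of I(G)(0) indexed by this chain: for x, y in distinct cosets, x < y iff x + I(G)(0) < y + I(G)(0). -/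
namespace ThrPaper

universe u

variable {X : Type*}

section Helpers

variable {G : Type*} [AddGroup G] {le : G → G → Prop}

private lemma compat_iff (hc : IsCompat le) (a b u v : G) :
    le u v ↔ le (a + u + b) (a + v + b) := by
  constructor
  · exact hc a b u v
  · intro h
    have h2 := hc (-a) (-b) _ _ h
    simpa [add_assoc] using h2

private lemma incomp_iff (hc : IsCompat le) (a b u v : G) :
    Incomp le u v ↔ Incomp le (a + u + b) (a + v + b) := by
  unfold Incomp
  rw [compat_iff hc a b u v, compat_iff hc a b v u]

private lemma lt_iff (hc : IsCompat le) (a b u v : G) :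
    Lt le u v ↔ Lt le (a + u + b) (a + v + b) := by
  unfold Lt
  rw [compat_iff hc a b u v, compat_iff hc a b v u]

private lemma path_translate (hc : IsCompat le) (a b : G) {u v : G}
    (h : Relation.ReflTransGen (fun p q => Incomp le p q) u v) :
    Relation.ReflTransGen (fun p q => Incomp le p q) (a + u + b) (a + v + b) :=
  Relation.ReflTransGen.lift (fun z => a + z + b)
    (fun p q hpq => (incomp_iff hc a b p q).1 hpq) _ _ h

private lemma incomp_symm_s12 : Symmetric (fun p q => Incomp le p q) :=
  fun _ _ h => ⟨h.2, h.1⟩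

end Helpers

/-- Properties of `I(G)(0)`, the connected component of `0` in the
incomparability graph of an ordered group `G`. -/
theorem component_of_zero_props {G : Type*} [AddGroup G] (le : G → G → Prop)
    (hpo : IsPartialOrderRel le) (hc : IsCompat le)
    (Icmp : Set G)
    (hIcmp : Icmp = {x : G | Relation.ReflTransGen (fun a b => Incomp le a b) 0 x}) :
    -- `I(G)(0)` is a subgroup of `G`
    ((0 : G) ∈ Icmp ∧ (∀ x ∈ Icmp, -x ∈ Icmp) ∧ ∀ x ∈ Icmp, ∀ y ∈ Icmp, x + y ∈ Icmp) ∧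
    -- it contains `inc(0) ∪ {0}`
    (∀ x : G, Incomp le x 0 → x ∈ Icmp) ∧
    -- it is the least subgroup containing `inc(0) ∪ {0}`
    (∀ K : Set G,
      ((0 : G) ∈ K ∧ (∀ x ∈ K, -x ∈ K) ∧ ∀ x ∈ K, ∀ y ∈ K, x + y ∈ K) →
      (∀ x : G, Incomp le x 0 → x ∈ K) → Icmp ⊆ K) ∧
    -- it is a normal subgroup
    (∀ x ∈ Icmp, ∀ g : G, -g + x + g ∈ Icmp) ∧
    -- it is a convex subset of `(G, ≤)`
    (∀ x y z : G, x ∈ Icmp → y ∈ Icmp → le x z → le z y → z ∈ Icmp) ∧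
    -- distinct cosets are comparable: the quotient order is total
    (∀ x y : G, -x + y ∉ Icmp → (Lt le x y ∨ Lt le y x)) ∧
    -- the quotient order is well defined, and the order on `G` is the lexicographical
    -- sum of the cosets: for `x, y` in distinct cosets, `x < y` iff `x + I < y + I`
    (∀ x x' y y' : G, -x + x' ∈ Icmp → -y + y' ∈ Icmp → -x + y ∉ Icmp →
      (Lt le x y ↔ Lt le x' y')) ∧
    -- the quotient order is compatible with the group operation
    (∀ a b x y : G, -x + y ∉ Icmp → Lt le x y → Lt le (a + x + b) (a + y + b)) := by

  subst hIcmp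
  set R : G → G → Prop := fun a b => Incomp le a b with hR
  have mem_iff : ∀ x : G, x ∈ {x : G | Relation.ReflTransGen R 0 x} ↔
      Relation.ReflTransGen R 0 x := fun x => Iff.rfl
  set I : Set G := {x : G | Relation.ReflTransGen R 0 x} with hI
  obtain ⟨hrefl, htrans, hanti⟩ := hpo
  -- subgroup facts
  have h0 : (0 : G) ∈ I := Relation.ReflTransGen.refl
  have hneg : ∀ x ∈ I, -x ∈ I := by
    intro x hx
    have h1 : Relation.ReflTransGen R (-x + 0 + 0) (-x + x + 0) := path_translate hc (-x) 0 hx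
    have h2 : Relation.ReflTransGen R (-x) 0 := by simpa using h1
    haveI : Std.Symm R := ⟨fun p q hpq => incomp_symm_s12 hpq⟩
    exact (Relation.ReflTransGen.stdSymm (r := R)).symm _ _ h2
  have hadd : ∀ x ∈ I, ∀ y ∈ I, x + y ∈ I := by
    intro x hx y hy
    have h1 : Relation.ReflTransGen R (x + 0 + 0) (x + y + 0) := path_translate hc x 0 hy
    have h2 : Relation.ReflTransGen R x (x + y) := by simpa using h1
    exact Relation.ReflTransGen.trans hx h2
  have hinc : ∀ x : G, Incomp le x 0 → x ∈ I :=
    fun x hx => Relation.ReflTransGen.single (incomp_symm_s12 hx)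
  -- convexity (via key betweenness argument)
  have hconv : ∀ x y z : G, x ∈ I → y ∈ I → le x z → le z y → z ∈ I := by
    intro x y z hx hy hxz hzy
    by_contra hzI
    set w : G := -x + z with hw
    have hwI : w ∉ I := by
      intro hwmem
      exact hzI (by simpa [hw] using hadd x hx w hwmem)
    have h0w : le 0 w := by
      have := hc (-x) 0 x z hxz
      simpa [add_assoc] using this
    have hv : -x + y ∈ I := hadd (-x) (hneg x hx) y hy
    have hwv : le w (-x + y) := by
      have := hc (-x) 0 z y hzy
      simpa [add_assoc] using this
    -- every element reachable from 0 is ≤ w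
    have main : ∀ t : G, Relation.ReflTransGen R 0 t → le t w := by
      intro t ht
      induction ht with
      | refl => exact h0w
      | tail h1 hbc ih =>
        rename_i b c
        have hcI : c ∈ I := Relation.ReflTransGen.tail h1 hbc
        by_cases hcw : le c w
        · exact hcw
        · by_cases hwc : le w c
          · exact absurd (htrans _ _ _ ih hwc) hbc.1
          · exact absurd (Relation.ReflTransGen.tail hcI ⟨hcw, hwc⟩) hwI
    have hvw : le (-x + y) w := main _ hv
    exact hwI (hanti _ _ hwv hvw ▸ hv)
  -- key lemma: positive elements outside I dominate I
  have key : ∀ u : G, Lt le 0 u → u ∉ I → ∀ w ∈ I, Lt le w u := by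
    intro u hu huI w hwmem
    have hcomp : ¬ Incomp le w u := by
      intro hiwu
      exact huI (Relation.ReflTransGen.tail hwmem hiwu)
    have huw : ¬ le u w := by
      intro huw
      exact huI (hconv 0 w u h0 hwmem hu.1 huw)
    rcases not_and_or.mp hcomp with h | h
    · exact ⟨not_not.mp h, huw⟩
    · exact absurd (not_not.mp h) huw
  -- distinct cosets are comparable
  have hdist : ∀ x y : G, -x + y ∉ I → (Lt le x y ∨ Lt le y x) := by
    intro x y hxy
    have hnic : ¬ Incomp le x y := by
      intro hi
      have : Incomp le 0 (-x + y) := by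
        have := (incomp_iff hc (-x) 0 x y).1 hi
        simpa [add_assoc] using this
      exact hxy (Relation.ReflTransGen.single this)
    have hne : x ≠ y := by
      rintro rfl
      exact hxy (by simpa using h0)
    rcases not_and_or.mp hnic with h | h
    · replace h := not_not.mp h
      exact Or.inl ⟨h, fun hyx => hne (hanti _ _ h hyx)⟩
    · replace h := not_not.mp h
      exact Or.inr ⟨h, fun hxy' => hne (hanti _ _ hxy' h)⟩
  -- positivity is stable under I-perturbation
  have pos_step : ∀ a ∈ I, ∀ b ∈ I, ∀ u : G, u ∉ I → Lt le 0 u → Lt le 0 (a + u + b) := by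
    intro a ha b hb u huI hu
    have h1 : Lt le (-a) u := key u hu huI (-a) (hneg a ha)
    have h2 : Lt le 0 (a + u) := by
      have := (lt_iff hc a 0 (-a) u).1 h1
      simpa [add_assoc] using this
    have hauI : a + u ∉ I := by
      intro hmem
      exact huI (by simpa [add_assoc] using hadd (-a) (hneg a ha) (a + u) hmem)
    have h3 : Lt le (-b) (a + u) := key (a + u) h2 hauI (-b) (hneg b hb)
    have h4 := (lt_iff hc 0 b (-b) (a + u)).1 h3
    simpa [add_assoc] using h4
  -- well-definedness : one direction
  have fwd : ∀ x x' y y' : G, -x + x' ∈ I → -y + y' ∈ I → -x + y ∉ I →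
      Lt le x y → Lt le x' y' := by
    intro x x' y y' hxx' hyy' hxy hlt
    have hu : Lt le 0 (-x + y) := by
      have := (lt_iff hc (-x) 0 x y).1 hlt
      simpa [add_assoc] using this
    have ha : -x' + x ∈ I := by
      have := hneg _ hxx'
      simpa using this
    have hstep := pos_step (-x' + x) ha (-y + y') hyy' (-x + y) hxy hu
    have hq : Lt le 0 (-x' + y') := by
      have he : (-x' + x) + (-x + y) + (-y + y') = -x' + y' := by
        simp [add_assoc]
      rwa [he] at hstep
    have := (lt_iff hc x' 0 0 (-x' + y')).1 hq
    simpa [add_assoc] using this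
  refine ⟨⟨h0, hneg, hadd⟩, hinc, ?_, ?_, hconv, hdist, ?_, ?_⟩
  · -- least subgroup
    intro K ⟨hK0, hKneg, hKadd⟩ hKinc
    intro x hx
    induction (mem_iff x).1 hx with
    | refl => exact hK0
    | tail h1 hbc ih =>
      rename_i b c
      have hb : b ∈ K := ih (h1)
      have hinc2 : Incomp le (-b + c) 0 := by
        have := (incomp_iff hc (-b) 0 b c).1 hbc
        have h' : Incomp le 0 (-b + c) := by simpa [add_assoc] using this
        exact incomp_symm_s12 h'
      have : -b + c ∈ K := hKinc _ hinc2
      have := hKadd b hb _ this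
      simpa [add_assoc] using this
  · -- normal
    intro x hx g
    have h1 := path_translate hc (-g) g hx
    have : Relation.ReflTransGen R 0 (-g + x + g) := by simpa using h1
    exact this
  · -- quotient order well defined / lex sum
    intro x x' y y' hxx' hyy' hxy
    have hxy' : -x' + y' ∉ I := by
      intro hmem
      apply hxy
      have he : (-x + x') + (-x' + y') + (-y' + y) = -x + y := by
        simp [add_assoc]
      have : (-x + x') + (-x' + y') + (-y' + y) ∈ I :=
        hadd _ (hadd _ hxx' _ hmem) _ (by simpa using hneg _ hyy')
      rwa [he] at this
    constructor
    · exact fwd x x' y y' hxx' hyy' hxy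
    · intro h
      exact fwd x' x y' y (by simpa using hneg _ hxx') (by simpa using hneg _ hyy') hxy' h
  · -- compatibility of quotient order
    intro a b x y _ hlt
    exact (lt_iff hc a b x y).1 hlt


end ThrPaper
end

section
/- Let G = (X, +, ≤) be an ordered group whose order is a semiorder, and let A(G) := {x ∈ X : the set ℤx = {nx : n ∈ ℤ} is an antichain of (X, ≤)}. Then A(G) is a normal subgroup of G, a convex subset of (X, ≤), and it is the largest subgroup of G which is an antichain (it is an antichain and contains every subgroup of G that is an antichain). -/
namespace ThrPaper

universe u

variable {X : Type*}

/-- In an ordered group whose order is a semiorder,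
`A(G) := {x | ℤx is an antichain}` is a normal subgroup, a convex subset, and the
largest subgroup of `G` which is an antichain. -/
theorem antichain_subgroup_props {G : Type*} [AddGroup G] (le : G → G → Prop)
    (hpo : IsPartialOrderRel le) (hc : IsCompat le)
    (hsemi : ¬ Embeds2p2 le ∧ ¬ Embeds3p1 le)
    (A : Set G)
    (hA : A = {x : G | ∀ m n : ℤ, m • x ≠ n • x → Incomp le (m • x) (n • x)}) :
    -- `A(G)` is a subgroup of `G`
    ((0 : G) ∈ A ∧ (∀ x ∈ A, -x ∈ A) ∧ ∀ x ∈ A, ∀ y ∈ A, x + y ∈ A) ∧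
    -- it is normal
    (∀ x ∈ A, ∀ g : G, -g + x + g ∈ A) ∧
    -- it is a convex subset of `(G, ≤)`
    (∀ x y z : G, x ∈ A → y ∈ A → le x z → le z y → z ∈ A) ∧
    -- it is an antichain
    (∀ x ∈ A, ∀ y ∈ A, x ≠ y → Incomp le x y) ∧
    -- it contains every subgroup of `G` which is an antichain
    (∀ K : Set G,
      ((0 : G) ∈ K ∧ (∀ x ∈ K, -x ∈ K) ∧ ∀ x ∈ K, ∀ y ∈ K, x + y ∈ K) →
      (∀ x ∈ K, ∀ y ∈ K, x ≠ y → Incomp le x y) → K ⊆ A) := by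
  classical
  obtain ⟨hrefl, htrans, hanti⟩ := hpo
  obtain ⟨h22, h31⟩ := hsemi
  -- translation lemmas
  have hL : ∀ g x y : G, le x y → le (g + x) (g + y) := by
    intro g x y h; simpa using hc g 0 x y h
  have hR : ∀ g x y : G, le x y → le (x + g) (y + g) := by
    intro g x y h; simpa using hc 0 g x y h
  have hL' : ∀ g x y : G, le (g + x) (g + y) → le x y := by
    intro g x y h
    have := hL (-g) _ _ h
    simpa [neg_add_cancel_left] using this
  have hR' : ∀ g x y : G, le (x + g) (y + g) → le x y := by
    intro g x y h
    have := hR (-g) _ _ h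
    simpa [add_neg_cancel_right] using this
  have ltL : ∀ g x y : G, Lt le x y → Lt le (g + x) (g + y) := by
    rintro g x y ⟨h1, h2⟩
    exact ⟨hL g _ _ h1, fun h => h2 (hL' g _ _ h)⟩
  have ltL' : ∀ g x y : G, Lt le (g + x) (g + y) → Lt le x y := by
    rintro g x y ⟨h1, h2⟩
    exact ⟨hL' g _ _ h1, fun h => h2 (hL g _ _ h)⟩
  have ltR : ∀ g x y : G, Lt le x y → Lt le (x + g) (y + g) := by
    rintro g x y ⟨h1, h2⟩
    exact ⟨hR g _ _ h1, fun h => h2 (hR' g _ _ h)⟩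
  have ltR' : ∀ g x y : G, Lt le (x + g) (y + g) → Lt le x y := by
    rintro g x y ⟨h1, h2⟩
    exact ⟨hR' g _ _ h1, fun h => h2 (hR g _ _ h)⟩
  -- strict order basics
  have lt_le : ∀ a b c : G, Lt le a b → le b c → Lt le a c := by
    rintro a b c ⟨h1, h2⟩ h3
    exact ⟨htrans _ _ _ h1 h3, fun h => h2 (htrans _ _ _ h3 h)⟩
  have le_lt : ∀ a b c : G, le a b → Lt le b c → Lt le a c := by
    rintro a b c h1 ⟨h2, h3⟩
    exact ⟨htrans _ _ _ h1 h2, fun h => h3 (htrans _ _ _ h h1)⟩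
  -- the two combinatorial rules coming from semiorderedness
  have rule2 : ∀ a b c d : G, Lt le a b → Lt le c d → Lt le a d ∨ Lt le c b := by
    intro a b c d hab hcd
    by_contra hcon
    push_neg at hcon
    obtain ⟨had, hcb⟩ := hcon
    have had' : le a d → le d a := fun h => by
      by_contra hq; exact had ⟨h, hq⟩
    have hcb' : le c b → le b c := fun h => by
      by_contra hq; exact hcb ⟨h, hq⟩
    have core1 : le d a → False := by
      intro hda
      have hca : le c a := htrans _ _ _ hcd.1 hda
      have hcb2 : le c b := htrans _ _ _ hca hab.1
      have hbc : le b c := hcb' hcb2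
      have hba : le b a := htrans _ _ _ hbc hca
      exact hab.2 hba
    have nac : le a c → False := fun h => core1 (had' (htrans _ _ _ h hcd.1))
    have nca : le c a → False := by
      intro h
      have hcb2 : le c b := htrans _ _ _ h hab.1
      have hbc : le b c := hcb' hcb2
      exact hab.2 (htrans _ _ _ hbc h)
    have nad : le a d → False := fun h => core1 (had' h)
    have nbc : le b c → False := fun h => nac (htrans _ _ _ hab.1 h)
    have ncb : le c b → False := fun h => nbc (hcb' h)
    have ndb : le d b → False := by
      intro h
      have hcb2 : le c b := htrans _ _ _ hcd.1 h
      have hbc : le b c := hcb' hcb2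
      exact hcd.2 (htrans _ _ _ h hbc)
    have nbd : le b d → False := fun h =>
      core1 (had' (htrans _ _ _ hab.1 h))
    exact h22 ⟨a, b, c, d, hab, hcd, ⟨nac, nca⟩, ⟨nad, core1⟩, ⟨nbc, ncb⟩, ⟨nbd, ndb⟩⟩
  have rule3 : ∀ a b c : G, Lt le a b → Lt le b c → ∀ d, Lt le a d ∨ Lt le d c := by
    intro a b c hab hbc d
    by_contra hcon
    push_neg at hcon
    obtain ⟨had, hdc⟩ := hcon
    have had' : le a d → le d a := fun h => by
      by_contra hq; exact had ⟨h, hq⟩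
    have hdc' : le d c → le c d := fun h => by
      by_contra hq; exact hdc ⟨h, hq⟩
    have core : le d a → False := by
      intro hda
      have hdb : le d b := htrans _ _ _ hda hab.1
      have hdc2 : le d c := htrans _ _ _ hdb hbc.1
      have hcd : le c d := hdc' hdc2
      have hcb : le c b := htrans _ _ _ hcd hdb
      exact hbc.2 hcb
    have core2 : le d b → False := by
      intro hdb
      have hdc2 : le d c := htrans _ _ _ hdb hbc.1
      have hcd : le c d := hdc' hdc2
      exact hbc.2 (htrans _ _ _ hcd hdb)
    have nad : le a d → False := fun h => core (had' h)
    have nbd : le b d → False := fun h => core (had' (htrans _ _ _ hab.1 h))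
    have ncd : le c d → False := by
      intro h
      have hbd : le b d := htrans _ _ _ hbc.1 h
      have had2 : le a d := htrans _ _ _ hab.1 hbd
      exact core (had' had2)
    have ndc : le d c → False := fun h => ncd (hdc' h)
    exact h31 ⟨a, b, c, d, hab, hbc, ⟨core, nad⟩, ⟨core2, nbd⟩, ⟨ndc, ncd⟩⟩
  -- the trace preorder
  have Trefl : ∀ u : G, PredLe le u u ∧ SuccLe le u u :=
    fun u => ⟨fun _ h => h, fun _ h => h⟩
  have Ttrans : ∀ u v w : G, (PredLe le u v ∧ SuccLe le u v) →
      (PredLe le v w ∧ SuccLe le v w) → (PredLe le u w ∧ SuccLe le u w) :=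
    fun u v w h1 h2 => ⟨fun z h => h2.1 z (h1.1 z h), fun z h => h1.2 z (h2.2 z h)⟩
  have Ttot : ∀ u v : G, (PredLe le u v ∧ SuccLe le u v) ∨
      (PredLe le v u ∧ SuccLe le v u) := by
    intro u v
    by_cases hp : PredLe le u v
    · by_cases hs : SuccLe le u v
      · exact Or.inl ⟨hp, hs⟩
      · right
        simp only [SuccLe] at hs
        push_neg at hs
        obtain ⟨b, hvb, hub⟩ := hs
        constructor
        · intro z hzv
          rcases rule3 z v b hzv hvb u with h | h
          · exact h
          · exact absurd h hub
        · intro z huz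
          rcases rule2 v b u z hvb huz with h | h
          · exact h
          · exact absurd h hub
    · right
      simp only [PredLe] at hp
      push_neg at hp
      obtain ⟨a, hau, hav⟩ := hp
      constructor
      · intro z hzv
        rcases rule2 z v a u hzv hau with h | h
        · exact h
        · exact absurd h hav
      · intro z huz
        rcases rule3 a u z hau huz v with h | h
        · exact absurd h hav
        · exact h
  -- compatibility of the trace preorder
  have TL : ∀ g u v : G, (PredLe le u v ∧ SuccLe le u v) →
      (PredLe le (g + u) (g + v) ∧ SuccLe le (g + u) (g + v)) := by
    rintro g u v ⟨h1, h2⟩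
    constructor
    · intro z hz
      have hz' : Lt le (-g + z) u := ltL' g _ _ (by rwa [add_neg_cancel_left])
      have := ltL g _ _ (h1 _ hz')
      rwa [add_neg_cancel_left] at this
    · intro z hz
      have hz' : Lt le v (-g + z) := ltL' g _ _ (by rwa [add_neg_cancel_left])
      have := ltL g _ _ (h2 _ hz')
      rwa [add_neg_cancel_left] at this
  have TR : ∀ g u v : G, (PredLe le u v ∧ SuccLe le u v) →
      (PredLe le (u + g) (v + g) ∧ SuccLe le (u + g) (v + g)) := by
    rintro g u v ⟨h1, h2⟩
    constructor
    · intro z hz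
      have hz' : Lt le (z + -g) u := ltR' g _ _ (by rwa [neg_add_cancel_right])
      have := ltR g _ _ (h1 _ hz')
      rwa [neg_add_cancel_right] at this
    · intro z hz
      have hz' : Lt le v (z + -g) := ltR' g _ _ (by rwa [neg_add_cancel_right])
      have := ltR g _ _ (h2 _ hz')
      rwa [neg_add_cancel_right] at this
  have Tneg : ∀ u v : G, (PredLe le u v ∧ SuccLe le u v) →
      (PredLe le (-v) (-u) ∧ SuccLe le (-v) (-u)) := by
    intro u v h
    have h1 := TL (-v) _ _ h
    rw [neg_add_cancel] at h1
    have h2 := TR (-u) _ _ h1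
    rwa [add_neg_cancel_right, zero_add] at h2
  have Tsum : ∀ a b c d : G, (PredLe le a b ∧ SuccLe le a b) →
      (PredLe le c d ∧ SuccLe le c d) →
      (PredLe le (a + c) (b + d) ∧ SuccLe le (a + c) (b + d)) :=
    fun a b c d h1 h2 => Ttrans _ _ _ (TL a _ _ h2) (TR d _ _ h1)
  have le_T : ∀ u v : G, le u v → (PredLe le u v ∧ SuccLe le u v) :=
    fun u v h => ⟨fun z hz => lt_le _ _ _ hz h, fun z hz => le_lt _ _ _ h hz⟩
  have Tnsmul : ∀ u v : G, (PredLe le u v ∧ SuccLe le u v) →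
      ∀ n : ℕ, (PredLe le (n • u) (n • v) ∧ SuccLe le (n • u) (n • v)) := by
    intro u v h n
    induction n with
    | zero => simpa [zero_nsmul] using Trefl (0 : G)
    | succ n ih =>
      rw [succ_nsmul, succ_nsmul]
      exact Tsum _ _ _ _ ih h
  -- the "ball" predicate and its trace-convexity
  have Birr : ∀ g : G, (Incomp le 0 g ∨ g = 0) → ¬ Lt le 0 g := by
    rintro g (⟨h1, _⟩ | rfl) h
    · exact h1 h.1
    · exact h.2 h.1
  have Birr' : ∀ g : G, (Incomp le 0 g ∨ g = 0) → ¬ Lt le g 0 := by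
    rintro g (⟨_, h2⟩ | rfl) h
    · exact h2 h.1
    · exact h.2 h.1
  have Bcvx : ∀ a g b : G, (Incomp le 0 a ∨ a = 0) → (Incomp le 0 b ∨ b = 0) →
      (PredLe le a g ∧ SuccLe le a g) → (PredLe le g b ∧ SuccLe le g b) →
      (Incomp le 0 g ∨ g = 0) := by
    intro a g b hBa hBb hag hgb
    by_cases h1 : le 0 g
    · by_cases h2 : le g 0
      · exact Or.inr (hanti g 0 h2 h1)
      · exact absurd (hgb.1 0 ⟨h1, h2⟩) (Birr b hBb)
    · by_cases h2 : le g 0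
      · exact absurd (hag.2 0 ⟨h2, h1⟩) (Birr' a hBa)
      · exact Or.inl ⟨h1, h2⟩
  -- Incomp translations
  have IncL : ∀ g u v : G, Incomp le u v → Incomp le (g + u) (g + v) := by
    rintro g u v ⟨h1, h2⟩
    exact ⟨fun h => h1 (hL' g _ _ h), fun h => h2 (hL' g _ _ h)⟩
  have IncR : ∀ g u v : G, Incomp le u v → Incomp le (u + g) (v + g) := by
    rintro g u v ⟨h1, h2⟩
    exact ⟨fun h => h1 (hR' g _ _ h), fun h => h2 (hR' g _ _ h)⟩
  -- conjugation commutes with zsmul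
  have conj_zsmul : ∀ (g c : G) (j : ℤ), j • (-g + c + g) = -g + j • c + g := by
    intro g c j
    induction j using Int.induction_on with
    | zero => simp
    | succ i ih =>
      rw [add_zsmul, add_zsmul, one_zsmul, one_zsmul, ih]
      simp [add_assoc]
    | pred i ih =>
      rw [sub_zsmul, sub_zsmul, one_zsmul, one_zsmul, ih]
      simp [sub_eq_add_neg, neg_add_rev, add_assoc]
  -- membership in A, normal form
  have hA' : ∀ w : G, w ∈ A ↔ ∀ j : ℤ, (Incomp le 0 (j • w) ∨ j • w = 0) := by
    intro w
    rw [hA]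
    simp only [Set.mem_setOf_eq]
    constructor
    · intro h j
      by_cases hj : j • w = 0
      · exact Or.inr hj
      · have h0 : (0 : ℤ) • w ≠ j • w := by
          rw [zero_zsmul]
          exact fun hh => hj hh.symm
        have := h 0 j h0
        rw [zero_zsmul] at this
        exact Or.inl this
    · intro h m n hmn
      have hne : (-m + n) • w ≠ 0 := by
        intro hz
        apply hmn
        rw [add_zsmul, neg_zsmul] at hz
        exact neg_add_eq_zero.mp hz
      have hI : Incomp le 0 ((-m + n) • w) := ((h _).resolve_right hne)
      have hI2 := IncL (m • w) _ _ hI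
      rw [add_zero] at hI2
      have e2 : m • w + (-m + n) • w = n • w := by
        rw [add_zsmul, neg_zsmul, ← add_assoc, add_neg_cancel, zero_add]
      rwa [e2] at hI2
  -- key closure lemma, natural-number version
  have KeyN : ∀ u v : G, (∀ j : ℤ, (Incomp le 0 (j • u) ∨ j • u = 0)) →
      (∀ j : ℤ, (Incomp le 0 (j • v) ∨ j • v = 0)) →
      ∀ n : ℕ, (Incomp le 0 (n • (u + v)) ∨ n • (u + v) = 0) := by
    intro u v hu hv n
    have cast_u : ∀ m : ℕ, (Incomp le 0 (m • u) ∨ m • u = 0) := by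
      intro m
      have := hu (m : ℤ)
      rwa [natCast_zsmul] at this
    have cast_v : ∀ m : ℕ, (Incomp le 0 (m • v) ∨ m • v = 0) := by
      intro m
      have := hv (m : ℤ)
      rwa [natCast_zsmul] at this
    have e_uu : (2 * n) • u = n • (u + u) := by
      rw [← two_nsmul, ← mul_nsmul]
    have e_vv : (2 * n) • v = n • (v + v) := by
      rw [← two_nsmul, ← mul_nsmul]
    rcases Ttot u v with h | h
    · refine Bcvx ((2 * n) • u) _ ((2 * n) • v) (cast_u _) (cast_v _) ?_ ?_
      · rw [e_uu]
        exact Tnsmul _ _ (Tsum _ _ _ _ (Trefl u) h) n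
      · rw [e_vv]
        exact Tnsmul _ _ (Tsum _ _ _ _ h (Trefl v)) n
    · refine Bcvx ((2 * n) • v) _ ((2 * n) • u) (cast_v _) (cast_u _) ?_ ?_
      · rw [e_vv]
        exact Tnsmul _ _ (Tsum _ _ _ _ h (Trefl v)) n
      · rw [e_uu]
        exact Tnsmul _ _ (Tsum _ _ _ _ (Trefl u) h) n
  -- key closure lemma, integer version
  have KeyZ : ∀ u v : G, (∀ j : ℤ, (Incomp le 0 (j • u) ∨ j • u = 0)) →
      (∀ j : ℤ, (Incomp le 0 (j • v) ∨ j • v = 0)) →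
      ∀ j : ℤ, (Incomp le 0 (j • (u + v)) ∨ j • (u + v) = 0) := by
    intro u v hu hv j
    rcases le_or_gt 0 j with hj | hj
    · lift j to ℕ using hj
      rw [natCast_zsmul]
      exact KeyN u v hu hv j
    · obtain ⟨n, rfl⟩ : ∃ n : ℕ, j = -(n : ℤ) := ⟨j.natAbs, by omega⟩
      have e : (-(n : ℤ)) • (u + v) = n • (-v + -u) := by
        rw [neg_zsmul, ← zsmul_neg, neg_add_rev, natCast_zsmul]
      rw [e]
      refine KeyN (-v) (-u) ?_ ?_ n
      · intro i
        rw [zsmul_neg, ← neg_zsmul]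
        exact hv (-i)
      · intro i
        rw [zsmul_neg, ← neg_zsmul]
        exact hu (-i)
  -- the subgroup facts
  have hzero : (0 : G) ∈ A := by
    rw [hA']
    intro j
    exact Or.inr (smul_zero j)
  have hneg : ∀ x ∈ A, -x ∈ A := by
    intro x hx
    rw [hA'] at hx ⊢
    intro j
    rw [zsmul_neg, ← neg_zsmul]
    exact hx (-j)
  have hadd : ∀ x ∈ A, ∀ y ∈ A, x + y ∈ A := by
    intro x hx y hy
    rw [hA'] at hx hy ⊢
    exact KeyZ x y hx hy
  have hnrm : ∀ x ∈ A, ∀ g : G, -g + x + g ∈ A := by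
    intro x hx g
    rw [hA'] at hx ⊢
    intro j
    rw [conj_zsmul]
    rcases hx j with hI | hz
    · left
      have h2 := IncR g _ _ (IncL (-g) _ _ hI)
      simpa using h2
    · right
      rw [hz]
      simp
  have hconv : ∀ x y z : G, x ∈ A → y ∈ A → le x z → le z y → z ∈ A := by
    intro x y z hx hy hxz hzy
    rw [hA'] at hx hy ⊢
    intro j
    have Txz := le_T _ _ hxz
    have Tzy := le_T _ _ hzy
    rcases le_or_gt 0 j with hj | hj
    · lift j to ℕ using hj
      rw [natCast_zsmul]
      refine Bcvx (j • x) _ (j • y) ?_ ?_ ?_ ?_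
      · have := hx (j : ℤ); rwa [natCast_zsmul] at this
      · have := hy (j : ℤ); rwa [natCast_zsmul] at this
      · exact Tnsmul _ _ Txz j
      · exact Tnsmul _ _ Tzy j
    · obtain ⟨n, rfl⟩ : ∃ n : ℕ, j = -(n : ℤ) := ⟨j.natAbs, by omega⟩
      have e : ∀ w : G, (-(n : ℤ)) • w = n • (-w) := by
        intro w
        rw [neg_zsmul, ← zsmul_neg, natCast_zsmul]
      rw [e]
      refine Bcvx (n • (-y)) _ (n • (-x)) ?_ ?_ ?_ ?_
      · have := hy (-(n : ℤ)); rwa [e] at this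
      · have := hx (-(n : ℤ)); rwa [e] at this
      · exact Tnsmul _ _ (Tneg _ _ Tzy) n
      · exact Tnsmul _ _ (Tneg _ _ Txz) n
  have hantichain : ∀ x ∈ A, ∀ y ∈ A, x ≠ y → Incomp le x y := by
    intro x hx y hy hne
    have hd : -x + y ∈ A := hadd _ (hneg _ hx) _ hy
    rw [hA'] at hd
    have hB := hd 1
    rw [one_zsmul] at hB
    rcases hB with hI | hz
    · have h2 := IncL x _ _ hI
      rwa [add_zero, add_neg_cancel_left] at h2
    · exact absurd (neg_add_eq_zero.mp hz) hne
  refine ⟨⟨hzero, hneg, hadd⟩, hnrm, hconv, hantichain, ?_⟩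
  rintro K ⟨hK0, hKneg, hKadd⟩ hKanti x hxK
  rw [hA]
  simp only [Set.mem_setOf_eq]
  intro m n hmn
  have hsmul : ∀ j : ℤ, j • x ∈ K := by
    intro j
    induction j using Int.induction_on with
    | zero => rw [zero_zsmul]; exact hK0
    | succ i ih =>
      rw [add_zsmul, one_zsmul]
      exact hKadd _ ih _ hxK
    | pred i ih =>
      rw [sub_zsmul, one_zsmul]
      exact hKadd _ ih _ (hKneg _ hxK)
  exact hKanti _ (hsmul m) _ (hsmul n) hmn

end ThrPaper
end
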